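/- arXiv:1410.4338 — 6 statements merged into one kernel-verified Lean document; each statement's English description precedes it below -/
import Mathlib

section
/- For every z = (z₁, z₂) ∈ ℝ² with z ≠ 0, the matrix J_z is invertible; equivalently, the bilinear form B_z(u, v) = vᵀ J_z u on ℝ⁸ is non-degenerate, i.e. if v ∈ ℝ⁸ satisfies B_z(u, v) = 0 for all u ∈ ℝ⁸, then v = 0. (This is the Métivier non-degeneracy condition for the Müller–Seeger example.) -/
open Matrix

/-- The 4×4 matrix `E_z` from the Müller–Seeger example. -/
noncomputable def Ez (z : ℝ × ℝ) : Matrix (Fin 4) (Fin 4) ℝ :=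
  !![z.1, 0, 0, -z.2;
     z.2, z.1, 0, 0;
     0, z.2, z.1, 0;
     0, 0, z.2, z.1]

/-- The 8×8 block matrix `J_z = [[0, E_z], [-E_z, 0]]`. -/
noncomputable def Jz (z : ℝ × ℝ) : Matrix (Fin 4 ⊕ Fin 4) (Fin 4 ⊕ Fin 4) ℝ :=
  Matrix.fromBlocks 0 (Ez z) (-(Ez z)) 0

lemma Ez_det (z : ℝ × ℝ) : (Ez z).det = z.1 ^ 4 + z.2 ^ 4 := by
  norm_num [Ez, Matrix.det_succ_row_zero, Fin.sum_univ_succ, Fin.castSucc, Fin.castAdd,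
    Fin.castLE]
  simp [Matrix.cons_val]
  ring

lemma Ez_det_ne (z : ℝ × ℝ) (hz : z ≠ 0) : (Ez z).det ≠ 0 := by
  rw [Ez_det]
  have h : ¬(z.1 = 0 ∧ z.2 = 0) := by
    intro ⟨h1, h2⟩; exact hz (Prod.ext h1 h2)
  intro hs
  have h1 : z.1 ^ 4 = 0 := le_antisymm (by nlinarith [sq_nonneg (z.2 ^ 2)]) (by positivity)
  have h2 : z.2 ^ 4 = 0 := le_antisymm (by nlinarith [sq_nonneg (z.1 ^ 2)]) (by positivity)
  exact h ⟨pow_eq_zero_iff (by norm_num : (4:ℕ) ≠ 0) |>.1 h1,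
    pow_eq_zero_iff (by norm_num : (4:ℕ) ≠ 0) |>.1 h2⟩

lemma Jz_isUnit (z : ℝ × ℝ) (hz : z ≠ 0) : IsUnit (Jz z) := by
  have hdet : IsUnit (Ez z).det := isUnit_iff_ne_zero.2 (Ez_det_ne z hz)
  set E := Ez z
  have h1 : E * E⁻¹ = 1 := Matrix.mul_nonsing_inv E hdet
  have h2 : E⁻¹ * E = 1 := Matrix.nonsing_inv_mul E hdet
  refine ⟨⟨Jz z, Matrix.fromBlocks 0 (-(E⁻¹)) (E⁻¹) 0, ?_, ?_⟩, rfl⟩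
  · show Jz z * _ = 1
    rw [Jz, Matrix.fromBlocks_multiply]
    simp [h1, ← Matrix.fromBlocks_one]
    exact h1
  · show _ * Jz z = 1
    rw [Jz, Matrix.fromBlocks_multiply]
    simp [h2, ← Matrix.fromBlocks_one]
    exact h2

/-- For `z ≠ 0`, `J_z` is invertible; equivalently the bilinear form
`B_z(u, v) = vᵀ J_z u` on `ℝ⁸` is non-degenerate (the Métivier condition). -/
theorem Jz_nondegenerate (z : ℝ × ℝ) (hz : z ≠ 0) :
    IsUnit (Jz z) ∧
      ∀ v : Fin 4 ⊕ Fin 4 → ℝ,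
        (∀ u : Fin 4 ⊕ Fin 4 → ℝ, v ⬝ᵥ (Jz z *ᵥ u) = 0) → v = 0 := by
  have hU := Jz_isUnit z hz
  refine ⟨hU, fun v hv => ?_⟩
  have key : v ᵥ* Jz z = 0 := by
    have := hv (v ᵥ* Jz z)
    rw [Matrix.dotProduct_mulVec] at this
    exact dotProduct_self_eq_zero.1 this
  have hinj := Matrix.vecMul_injective_iff_isUnit.2 hU
  have h0 : v ᵥ* Jz z = (0 : Fin 4 ⊕ Fin 4 → ℝ) ᵥ* Jz z := by
    rw [key, Matrix.zero_vecMul]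
  exact hinj h0
end

section
/- There do not exist real numbers a, b, c, d such that ((a z₁ + b z₂)² + (c z₁ + d z₂)²)² = z₁⁴ + z₂⁴ for all z₁, z₂ ∈ ℝ. -/
/-- There are no reals `a, b, c, d` with
`((a z₁ + b z₂)² + (c z₁ + d z₂)²)² = z₁⁴ + z₂⁴` for all `z₁, z₂ ∈ ℝ`. -/
theorem no_sum_of_two_squares_representation :
    ¬ ∃ a b c d : ℝ, ∀ z₁ z₂ : ℝ,
        ((a * z₁ + b * z₂) ^ 2 + (c * z₁ + d * z₂) ^ 2) ^ 2 = z₁ ^ 4 + z₂ ^ 4 := by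
  rintro ⟨a, b, c, d, h⟩
  have h1 := h 1 0
  have h2 := h 0 1
  have h3 := h 1 1
  have h4 := h 1 (-1)
  nlinarith [sq_nonneg (a*b+c*d), sq_nonneg (a^2+c^2), sq_nonneg (b^2+d^2), sq_nonneg (a^2+c^2-1), sq_nonneg (b^2+d^2-1), sq_nonneg (a^2+c^2+b^2+d^2)]
end

section
/- Let α, β > 0, γ ≠ 0 and a > 0, and let F(λ) = ((aλ)^α + λ^{2β})^γ, a differentiable strictly monotone bijection from (0, ∞) onto (0, ∞) (increasing if γ > 0, decreasing if γ < 0). Let g : (0, ∞) → (0, ∞) be its inverse. Then g is differentiable and for every μ > 0, writing λ = g(μ), one has λ / (|γ| · max(α, 2β) · μ) ≤ |g′(μ)| ≤ λ / (|γ| · min(α, 2β) · μ). In particular |g′(μ)| is comparable to μ^{−1} λ with constants depending only on α, β, γ. -/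
open Set

/-- Let `F(λ) = ((aλ)^α + λ^(2β))^γ` be the strictly monotone bijection of `(0,∞)` onto
itself, and let `g` be its inverse. Then `g` is differentiable and, for `μ > 0` and
`λ = g(μ)`, one has `λ/(|γ| max(α,2β) μ) ≤ |g′(μ)| ≤ λ/(|γ| min(α,2β) μ)`. -/
theorem inverse_spectral_parameter_derivative_bound (α β γ a : ℝ)
    (hα : 0 < α) (hβ : 0 < β) (hγ : γ ≠ 0) (ha : 0 < a)
    (g : ℝ → ℝ)
    (hg : ∀ μ ∈ Ioi (0 : ℝ), 0 < g μ ∧ ((a * g μ) ^ α + (g μ) ^ (2 * β)) ^ γ = μ)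
    (hginv : ∀ l ∈ Ioi (0 : ℝ), g (((a * l) ^ α + l ^ (2 * β)) ^ γ) = l) :
    ∀ μ ∈ Ioi (0 : ℝ),
      DifferentiableAt ℝ g μ ∧
      g μ / (|γ| * max α (2 * β) * μ) ≤ |deriv g μ| ∧
      |deriv g μ| ≤ g μ / (|γ| * min α (2 * β) * μ) := by
  intro μ hμ
  have hμ0 : (0:ℝ) < μ := hμ
  obtain ⟨hl0, hFl⟩ := hg μ hμ
  set lam := g μ with hlam
  have hal : 0 < a * lam := mul_pos ha hl0
  set A : ℝ := (a * lam) ^ α with hAdef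
  set B : ℝ := lam ^ (2 * β) with hBdef
  have hA : 0 < A := Real.rpow_pos_of_pos hal α
  have hB : 0 < B := Real.rpow_pos_of_pos hl0 (2 * β)
  set S : ℝ := A + B with hSdef
  have hS : 0 < S := by positivity
  have hSγ : S ^ γ = μ := hFl
  -- derivative of the inner sum
  have hinner : HasStrictDerivAt (fun l : ℝ => a * l) a lam := by
    simpa using (hasStrictDerivAt_id lam).const_mul a
  have hA' : HasStrictDerivAt (fun l : ℝ => (a * l) ^ α)
      (α * (a * lam) ^ (α - 1) * a) lam :=
    (Real.hasStrictDerivAt_rpow_const (Or.inl hal.ne')).comp lam hinner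
  have hB' : HasStrictDerivAt (fun l : ℝ => l ^ (2 * β))
      (2 * β * lam ^ (2 * β - 1)) lam :=
    Real.hasStrictDerivAt_rpow_const (Or.inl hl0.ne')
  have hS' : HasStrictDerivAt (fun l : ℝ => (a * l) ^ α + l ^ (2 * β))
      (α * (a * lam) ^ (α - 1) * a + 2 * β * lam ^ (2 * β - 1)) lam := hA'.add hB'
  set D : ℝ := α * (a * lam) ^ (α - 1) * a + 2 * β * lam ^ (2 * β - 1) with hDdef
  have hF : HasStrictDerivAt (fun l : ℝ => ((a * l) ^ α + l ^ (2 * β)) ^ γ)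
      (γ * S ^ (γ - 1) * D) lam :=
    by have h := (Real.hasStrictDerivAt_rpow_const (x := S) (p := γ) (Or.inl hS.ne')).comp lam hS'; exact h
  set F' : ℝ := γ * S ^ (γ - 1) * D with hF'def
  have hD : 0 < D := by
    have h1 : 0 < (a * lam) ^ (α - 1) := Real.rpow_pos_of_pos hal _
    have h2 : 0 < lam ^ (2 * β - 1) := Real.rpow_pos_of_pos hl0 _
    positivity
  have hSγ1 : 0 < S ^ (γ - 1) := Real.rpow_pos_of_pos hS _
  have hF'ne : F' ≠ 0 := mul_ne_zero (mul_ne_zero hγ hSγ1.ne') hD.ne'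
  -- g is a local left inverse, so it has a strict derivative F'⁻¹ at μ
  have hev : ∀ᶠ x in nhds lam, g (((a * x) ^ α + x ^ (2 * β)) ^ γ) = x := by
    filter_upwards [isOpen_Ioi.mem_nhds (show lam ∈ Ioi (0:ℝ) from hl0)] with x hx
    exact hginv x hx
  have hgd : HasStrictDerivAt g F'⁻¹ μ := by
    have := hF.to_local_left_inverse hF'ne hev
    rw [← hSγ]; exact this
  have hdiff : DifferentiableAt ℝ g μ := hgd.hasDerivAt.differentiableAt
  have hderiv : deriv g μ = F'⁻¹ := hgd.hasDerivAt.deriv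
  -- rewrite the derivative explicitly
  have hSg1 : S ^ (γ - 1) = μ / S := by
    rw [Real.rpow_sub hS, Real.rpow_one, hSγ]
  have hAa : (a * lam) ^ (α - 1) = A / (a * lam) := by
    rw [Real.rpow_sub hal, Real.rpow_one, hAdef]
  have hBb : lam ^ (2 * β - 1) = B / lam := by
    rw [Real.rpow_sub hl0, Real.rpow_one, hBdef]
  have hDval : D = (α * A + 2 * β * B) / lam := by
    rw [hDdef, hAa, hBb]
    field_simp
  have hABpos : 0 < α * A + 2 * β * B := by positivity
  have hformula : |deriv g μ| = lam * S / (|γ| * μ * (α * A + 2 * β * B)) := by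
    rw [hderiv, abs_inv, hF'def, hSg1, hDval, abs_mul, abs_mul,
      abs_of_pos (show (0:ℝ) < μ / S by positivity),
      abs_of_pos (show (0:ℝ) < (α * A + 2 * β * B) / lam by positivity)]
    rw [eq_div_iff (by positivity), inv_mul_eq_div, div_eq_iff (by positivity)]
    field_simp
  have habsγ : 0 < |γ| := abs_pos.2 hγ
  refine ⟨hdiff, ?_, ?_⟩
  · have hle : |γ| * μ * (α * A + 2 * β * B) ≤ |γ| * max α (2 * β) * μ * S := by
      have h1 : α * A ≤ max α (2 * β) * A :=
        mul_le_mul_of_nonneg_right (le_max_left _ _) hA.le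
      have h2 : 2 * β * B ≤ max α (2 * β) * B :=
        mul_le_mul_of_nonneg_right (le_max_right _ _) hB.le
      have hsum : α * A + 2 * β * B ≤ max α (2 * β) * S := by
        rw [hSdef, mul_add]; exact add_le_add h1 h2
      calc |γ| * μ * (α * A + 2 * β * B) ≤ |γ| * μ * (max α (2 * β) * S) :=
            mul_le_mul_of_nonneg_left hsum (by positivity)
        _ = |γ| * max α (2 * β) * μ * S := by ring
    rw [hformula]
    have hrw : g μ / (|γ| * max α (2 * β) * μ) = lam * S / (|γ| * max α (2 * β) * μ * S) := by
      rw [← hlam]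
      field_simp
    rw [hrw]
    exact div_le_div_of_nonneg_left (by positivity) (by positivity) hle
  · have hle : |γ| * min α (2 * β) * μ * S ≤ |γ| * μ * (α * A + 2 * β * B) := by
      have h1 : min α (2 * β) * A ≤ α * A :=
        mul_le_mul_of_nonneg_right (min_le_left _ _) hA.le
      have h2 : min α (2 * β) * B ≤ 2 * β * B :=
        mul_le_mul_of_nonneg_right (min_le_right _ _) hB.le
      have hsum : min α (2 * β) * S ≤ α * A + 2 * β * B := by
        rw [hSdef, mul_add]; exact add_le_add h1 h2
      calc |γ| * min α (2 * β) * μ * S = |γ| * μ * (min α (2 * β) * S) := by ring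
        _ ≤ |γ| * μ * (α * A + 2 * β * B) :=
            mul_le_mul_of_nonneg_left hsum (by positivity)
    rw [hformula]
    have hrw : g μ / (|γ| * min α (2 * β) * μ) = lam * S / (|γ| * min α (2 * β) * μ * S) := by
      rw [← hlam]
      field_simp
    rw [hrw]
    have hmin : 0 < min α (2 * β) := lt_min hα (by positivity)
    exact div_le_div_of_nonneg_left (by positivity) (by positivity) hle
end

section
/- Let α, β > 0, γ ≠ 0 and a > 0, and let F(λ) = (1 + (aλ)^α + λ^{2β})^γ, a differentiable strictly monotone bijection from (0, ∞) onto (1, ∞) if γ > 0 and onto (0, 1) if γ < 0. Let g be its inverse function. Then g is differentiable and for every μ in its domain, writing λ = g(μ) and M = μ^{1/γ} (so M > 1), one has λ·M / (|γ| · max(α, 2β) · μ · (M − 1)) ≤ |g′(μ)| ≤ λ·M / (|γ| · min(α, 2β) · μ · (M − 1)). In particular, as μ^{1/γ} → ∞ one has |g′(μ)| ∼ μ^{−1} λ, and as μ^{1/γ} → 1 one has |g′(μ)| ∼ |1−μ|^{−1} λ, with constants depending only on α, β, γ. -/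
open Set

/-- Let `F(λ) = (1 + (aλ)^α + λ^(2β))^γ`, a strictly monotone bijection from `(0,∞)` onto
`(1,∞)` if `γ > 0` and onto `(0,1)` if `γ < 0`, and let `g` be its inverse. Then `g` is
differentiable and, for `μ` in its domain, `λ = g(μ)` and `M = μ^(1/γ)`,
`λM/(|γ| max(α,2β) μ (M−1)) ≤ |g′(μ)| ≤ λM/(|γ| min(α,2β) μ (M−1))`. -/
theorem inverse_inhomogeneous_spectral_parameter_derivative_bound (α β γ a : ℝ)
    (hα : 0 < α) (hβ : 0 < β) (hγ : γ ≠ 0) (ha : 0 < a)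
    (g : ℝ → ℝ)
    (hg : ∀ μ ∈ (if 0 < γ then Ioi (1 : ℝ) else Ioo (0 : ℝ) 1),
      0 < g μ ∧ (1 + (a * g μ) ^ α + (g μ) ^ (2 * β)) ^ γ = μ)
    (hginv : ∀ l ∈ Ioi (0 : ℝ), g ((1 + (a * l) ^ α + l ^ (2 * β)) ^ γ) = l) :
    ∀ μ ∈ (if 0 < γ then Ioi (1 : ℝ) else Ioo (0 : ℝ) 1),
      DifferentiableAt ℝ g μ ∧
      g μ * μ ^ (1 / γ) / (|γ| * max α (2 * β) * μ * (μ ^ (1 / γ) - 1)) ≤ |deriv g μ| ∧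
      |deriv g μ| ≤ g μ * μ ^ (1 / γ) / (|γ| * min α (2 * β) * μ * (μ ^ (1 / γ) - 1)) := by
  intro μ hμ
  obtain ⟨hl, hFl⟩ := hg μ hμ
  set l := g μ with hl_def
  have hApos : 0 < (a * l) ^ α := Real.rpow_pos_of_pos (mul_pos ha hl) _
  have hBpos : 0 < l ^ (2 * β) := Real.rpow_pos_of_pos hl _
  set A := (a * l) ^ α with hA_def
  set B := l ^ (2 * β) with hB_def
  set u := 1 + A + B with hu_def
  have hu1 : 1 < u := by simp only [hu_def]; linarith
  have hupos : 0 < u := by linarith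
  have hμpos : 0 < μ := hFl ▸ Real.rpow_pos_of_pos hupos γ
  have hM : μ ^ (1 / γ) = u := by
    rw [← hFl, ← Real.rpow_mul hupos.le, mul_one_div_cancel hγ, Real.rpow_one]
  -- monotonicity of the inner function
  have humono : ∀ x y : ℝ, 0 < x → x ≤ y →
      1 + (a * x) ^ α + x ^ (2 * β) ≤ 1 + (a * y) ^ α + y ^ (2 * β) := by
    intro x y hx hxy
    have h1 : (a * x) ^ α ≤ (a * y) ^ α :=
      Real.rpow_le_rpow (mul_pos ha hx).le (by nlinarith) hα.le
    have h2 : x ^ (2 * β) ≤ y ^ (2 * β) := Real.rpow_le_rpow hx.le hxy (by linarith)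
    linarith
  -- continuity of g at μ
  have hcont : ContinuousAt g μ := by
    by_cases hγ0 : 0 < γ
    · rw [if_pos hγ0] at hμ hg
      have hmono : StrictMonoOn g (Ioi (1 : ℝ)) := by
        intro x hx y hy hxy
        by_contra hle
        push_neg at hle
        have h1 := humono _ _ (hg y hy).1 hle
        have h2 : y ≤ x := by
          have hgy := (hg y hy).1
          have hA' : (0:ℝ) ≤ (a * g y) ^ α := Real.rpow_nonneg (by nlinarith) α
          have hB' : (0:ℝ) ≤ (g y) ^ (2 * β) := Real.rpow_nonneg hgy.le _
          rw [← (hg x hx).2, ← (hg y hy).2]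
          exact Real.rpow_le_rpow (by linarith) h1 hγ0.le
        linarith
      have himg : g '' (Ioi (1 : ℝ)) ∈ nhds (g μ) := by
        apply Filter.mem_of_superset (isOpen_Ioi.mem_nhds (show (0:ℝ) < g μ from hl))
        rintro t ht
        have htpos : (0:ℝ) < t := ht
        have h1 : 1 < 1 + (a * t) ^ α + t ^ (2 * β) := by
          have := Real.rpow_pos_of_pos (mul_pos ha htpos) α
          have := Real.rpow_pos_of_pos htpos (2 * β)
          linarith
        have hFt : (1 + (a * t) ^ α + t ^ (2 * β)) ^ γ ∈ Ioi (1:ℝ) :=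
          (Real.one_lt_rpow_iff_of_pos (by linarith)).2 (Or.inl ⟨h1, hγ0⟩)
        exact ⟨_, hFt, hginv t ht⟩
      exact hmono.continuousAt_of_image_mem_nhds (isOpen_Ioi.mem_nhds hμ) himg
    · rw [if_neg hγ0] at hμ hg
      have hγneg : γ < 0 := lt_of_le_of_ne (not_lt.1 hγ0) hγ
      have hmono : StrictMonoOn (fun x => -g x) (Ioo (0:ℝ) 1) := by
        intro x hx y hy hxy
        simp only [neg_lt_neg_iff]
        by_contra hle
        push_neg at hle
        have h1 := humono _ _ (hg x hx).1 hle
        have h2 : y ≤ x := by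
          have hgx := (hg x hx).1
          have hA' : (0:ℝ) < (a * g x) ^ α := Real.rpow_pos_of_pos (by nlinarith) α
          have hB' : (0:ℝ) < (g x) ^ (2 * β) := Real.rpow_pos_of_pos hgx _
          rw [← (hg x hx).2, ← (hg y hy).2]
          exact Real.rpow_le_rpow_of_nonpos (by linarith) h1 hγneg.le
        linarith
      have himg : (fun x => -g x) '' (Ioo (0:ℝ) 1) ∈ nhds (-g μ) := by
        apply Filter.mem_of_superset (isOpen_Iio.mem_nhds (show -g μ < 0 by linarith))
        rintro t ht
        have htneg : t < 0 := ht
        have hspos : (0:ℝ) < -t := by linarith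
        have h1 : 1 < 1 + (a * (-t)) ^ α + (-t) ^ (2 * β) := by
          have := Real.rpow_pos_of_pos (mul_pos ha hspos) α
          have := Real.rpow_pos_of_pos hspos (2 * β)
          linarith
        have hFt : (1 + (a * (-t)) ^ α + (-t) ^ (2 * β)) ^ γ ∈ Ioo (0:ℝ) 1 :=
          ⟨Real.rpow_pos_of_pos (by linarith) γ,
           Real.rpow_lt_one_of_one_lt_of_neg h1 hγneg⟩
        exact ⟨_, hFt, by dsimp only; rw [hginv (-t) hspos, neg_neg]⟩
      have := (hmono.continuousAt_of_image_mem_nhds (isOpen_Ioo.mem_nhds hμ) himg).neg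
      exact this.congr (Filter.Eventually.of_forall fun x => by simp)
  -- the derivative of the forward map
  have h1 : HasDerivAt (fun x : ℝ => (a * x) ^ α) (α * (a * l) ^ (α - 1) * a) l := by
    have hinner : HasDerivAt (fun x : ℝ => a * x) a l := by
      simpa using (hasDerivAt_id l).const_mul a
    have houter := Real.hasDerivAt_rpow_const (x := a * l) (p := α)
      (Or.inl (mul_pos ha hl).ne')
    simpa [Function.comp_def, mul_assoc] using houter.comp l hinner
  have h2 : HasDerivAt (fun x : ℝ => x ^ (2 * β)) (2 * β * l ^ (2 * β - 1)) l :=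
    Real.hasDerivAt_rpow_const (Or.inl hl.ne')
  have hu' : HasDerivAt (fun x : ℝ => 1 + (a * x) ^ α + x ^ (2 * β))
      (α * (a * l) ^ (α - 1) * a + 2 * β * l ^ (2 * β - 1)) l := (h1.const_add 1).add h2
  set S := α * A + 2 * β * B with hS_def
  have hSpos : 0 < S := by
    simp only [hS_def]; positivity
  have hf'eq : γ * u ^ (γ - 1) * (α * (a * l) ^ (α - 1) * a + 2 * β * l ^ (2 * β - 1))
      = γ * μ * S / (u * l) := by
    rw [Real.rpow_sub hupos, Real.rpow_one, Real.rpow_sub (mul_pos ha hl), Real.rpow_one,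
      Real.rpow_sub hl, Real.rpow_one, hFl]
    have hla : a * l ≠ 0 := (mul_pos ha hl).ne'
    field_simp
    ring
  have hF : HasDerivAt (fun x : ℝ => (1 + (a * x) ^ α + x ^ (2 * β)) ^ γ)
      (γ * μ * S / (u * l)) l := by
    have houter := Real.hasDerivAt_rpow_const (x := u) (p := γ) (Or.inl hupos.ne')
    rw [← hf'eq]
    have := houter.comp l hu'
    simpa [Function.comp_def, hu_def, hA_def, hB_def, mul_assoc] using this
  have hf'ne : γ * μ * S / (u * l) ≠ 0 := by
    apply div_ne_zero _ (mul_pos hupos hl).ne'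
    exact mul_ne_zero (mul_ne_zero hγ hμpos.ne') hSpos.ne'
  have hD : (if 0 < γ then Ioi (1 : ℝ) else Ioo (0 : ℝ) 1) ∈ nhds μ := by
    split_ifs at hμ ⊢ with h
    · exact isOpen_Ioi.mem_nhds hμ
    · exact isOpen_Ioo.mem_nhds hμ
  have hfg : ∀ᶠ x in nhds μ, (fun t : ℝ => (1 + (a * t) ^ α + t ^ (2 * β)) ^ γ) (g x) = x :=
    Filter.eventually_of_mem hD (fun x hx => (hg x hx).2)
  have hder : HasDerivAt g (γ * μ * S / (u * l))⁻¹ μ :=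
    hF.of_local_left_inverse hcont hf'ne hfg
  clear_value S u B A l
  refine ⟨hder.differentiableAt, ?_, ?_⟩
  · -- lower bound
    rw [hM, hder.deriv, inv_div]
    have habs : |u * l / (γ * μ * S)| = l * u / (|γ| * μ * S) := by
      rw [abs_div, abs_mul (γ * μ) S, abs_mul γ μ, abs_of_pos (mul_pos hupos hl),
        abs_of_pos hμpos, abs_of_pos hSpos]
      ring
    rw [habs]
    have hγabs : 0 < |γ| := abs_pos.2 hγ
    have hum1 : u - 1 = A + B := by simp only [hu_def]; ring
    apply div_le_div_of_nonneg_left (mul_pos hl hupos).le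
      (mul_pos (mul_pos hγabs hμpos) hSpos)
    have hSle : S ≤ max α (2 * β) * (u - 1) := by
      rw [hum1]
      have h1 : α ≤ max α (2 * β) := le_max_left _ _
      have h2 : 2 * β ≤ max α (2 * β) := le_max_right _ _
      simp only [hS_def]
      nlinarith
    have h := mul_le_mul_of_nonneg_left hSle (mul_pos hγabs hμpos).le
    linarith [h]
  · -- upper bound
    rw [hM, hder.deriv, inv_div]
    have habs : |u * l / (γ * μ * S)| = l * u / (|γ| * μ * S) := by
      rw [abs_div, abs_mul (γ * μ) S, abs_mul γ μ, abs_of_pos (mul_pos hupos hl),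
        abs_of_pos hμpos, abs_of_pos hSpos]
      ring
    rw [habs]
    have hγabs : 0 < |γ| := abs_pos.2 hγ
    have hminpos : 0 < min α (2 * β) := lt_min hα (by linarith)
    have hum1 : u - 1 = A + B := by simp only [hu_def]; ring
    have hu1' : 0 < u - 1 := by linarith
    apply div_le_div_of_nonneg_left (mul_pos hl hupos).le
      (mul_pos (mul_pos (mul_pos hγabs hminpos) hμpos) hu1')
    have hSge : min α (2 * β) * (u - 1) ≤ S := by
      rw [hum1]
      have h1 : min α (2 * β) ≤ α := min_le_left _ _
      have h2 : min α (2 * β) ≤ 2 * β := min_le_right _ _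
      simp only [hS_def]
      nlinarith
    have h := mul_le_mul_of_nonneg_left hSge (mul_pos hγabs hμpos).le
    linarith [h]
end

section
/- Let n, d ≥ 1 be integers, let α, β > 0 and γ ≠ 0, and let p, q, r satisfy 1 ≤ p ≤ 2 ≤ q ≤ ∞, 1 ≤ r ≤ 2(d+1)/(d+3), and not simultaneously d = 1, p = 2, q = 2. For μ > 0 and each integer k ≥ 0 let μ_k be the unique λ > 0 with ((2k+n)λ)^α + λ^{2β} = μ^{1/γ}. Set E = n(1/p − 1/q) + d(1/r − 1/r′), σ = φ(1/p − 1/2) + φ(1/2 − 1/q), B = E/(αγ) − 1, and A = E/(2βγ) + (1/γ)(1/α − 1/(2β))(σ + 1) − 1. Then there is a constant C (depending on n, d, p, q, r, α, β, γ) such that for every μ > 0: Σ_{k=0}^{∞} μ^{−1} μ_k^{E} (2k+n)^{σ} ≤ C μ^{B} whenever μ^{(1/α − 1/(2β))/γ} ≤ 1, and Σ_{k=0}^{∞} μ^{−1} μ_k^{E} (2k+n)^{σ} ≤ C μ^{A} whenever μ^{(1/α − 1/(2β))/γ} > 1. -/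
open scoped ENNReal

/-- The piecewise-linear exponent function `φ` of Koch–Ricci:
`φ(s) = −s/2` for `s ≤ s* = 1/(2n+1)` and `φ(s) = ns − 1/2` for `s ≥ s*`. -/
noncomputable def phiKR (n : ℕ) (s : ℝ) : ℝ :=
  if s ≤ 1 / (2 * n + 1) then -s / 2 else n * s - 1 / 2

private lemma KR_bernoulli_neg {s p : ℝ} (hs0 : 0 < s) (hs1 : s ≤ 1) (hp : p ≤ 0) :
    1 + p * (s - 1) ≤ s ^ p := by
  rcases le_or_gt (-1) p with h1 | h1
  · have hv0 : 0 ≤ -p := by linarith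
    have hv1 : -p ≤ 1 := by linarith
    have hb : s ^ (-p) ≤ 1 + (-p) * (s - 1) := by
      have h := rpow_one_add_le_one_add_mul_self (s := s - 1) (by linarith) hv0 hv1
      simpa using h
    set w : ℝ := 1 + (-p) * (s - 1) with hw
    have hw0 : 0 < w := by nlinarith
    have h2 : w⁻¹ ≤ s ^ p := by
      rw [show s ^ p = (s ^ (-p))⁻¹ by rw [← Real.rpow_neg hs0.le]; ring_nf]
      exact inv_anti₀ (Real.rpow_pos_of_pos hs0 _) hb
    have h3 : 1 + p * (s - 1) ≤ w⁻¹ := by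
      rw [← one_div, le_div_iff₀ hw0, hw]
      nlinarith [sq_nonneg (p * (s - 1))]
    linarith
  · have hd : (0:ℝ) ≤ (1 - s)/s := div_nonneg (by linarith) hs0.le
    have h := one_add_mul_self_le_rpow_one_add (s := (1 - s)/s) (p := -p)
      (by linarith) (by linarith)
    have h1s : (1 : ℝ) + (1 - s)/s = s⁻¹ := by field_simp; ring
    rw [h1s] at h
    have h2 : s⁻¹ ^ (-p) = s ^ p := by
      rw [Real.inv_rpow hs0.le, ← Real.rpow_neg hs0.le, neg_neg]
    rw [h2] at h
    have key : (1 - s) ≤ (1 - s)/s := by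
      rw [le_div_iff₀ hs0]; nlinarith
    nlinarith [mul_le_mul_of_nonneg_left key (by linarith : (0:ℝ) ≤ -p)]

private lemma KR_step_neg {p j : ℝ} (hp : p < 0) (hj : 2 ≤ j) :
    j ^ (p - 1) ≤ ((j - 1) ^ p - j ^ p) / (-p) := by
  have hj0 : (0:ℝ) < j := by linarith
  have hs0 : (0:ℝ) < (j - 1)/j := div_pos (by linarith) hj0
  have hs1 : (j - 1)/j ≤ 1 := by rw [div_le_one hj0]; linarith
  have hb := KR_bernoulli_neg hs0 hs1 hp.le
  rw [Real.div_rpow (by linarith) hj0.le] at hb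
  have hjp : (0:ℝ) < j ^ p := Real.rpow_pos_of_pos hj0 _
  rw [le_div_iff₀ hjp] at hb
  have hd : (j - 1)/j - 1 = -(1/j) := by field_simp; ring
  rw [hd] at hb
  have hj1 : j ^ (p - 1) = j ^ p / j := by
    rw [Real.rpow_sub hj0, Real.rpow_one]
  rw [le_div_iff₀ (by linarith : (0:ℝ) < -p), hj1]
  have : (1 + p * -(1/j)) * j ^ p = j ^ p - p * (j ^ p / j) := by
    field_simp; ring
  nlinarith [this, hb]

private lemma KR_step_pos {p j : ℝ} (hp0 : 0 < p) (hp1 : p ≤ 1) (hj : 1 ≤ j) :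
    j ^ (p - 1) ≤ (j ^ p - (j - 1) ^ p) / p := by
  have hj0 : (0:ℝ) < j := by linarith
  have hb : ((j-1)/j) ^ p ≤ 1 + p * ((j-1)/j - 1) := by
    have h := rpow_one_add_le_one_add_mul_self (s := (j-1)/j - 1)
      (by have : (0:ℝ) ≤ (j-1)/j := div_nonneg (by linarith) hj0.le; linarith)
      hp0.le hp1
    simpa using h
  rw [Real.div_rpow (by linarith) hj0.le] at hb
  have hjp : (0:ℝ) < j ^ p := Real.rpow_pos_of_pos hj0 _
  rw [div_le_iff₀ hjp] at hb
  have hd : (j - 1)/j - 1 = -(1/j) := by field_simp; ring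
  rw [hd] at hb
  have hj1 : j ^ (p - 1) = j ^ p / j := by
    rw [Real.rpow_sub hj0, Real.rpow_one]
  rw [le_div_iff₀ hp0, hj1]
  have : (1 + p * -(1/j)) * j ^ p = j ^ p - p * (j ^ p / j) := by
    field_simp; ring
  nlinarith [this, hb]

private lemma KR_partial_sum {p : ℝ} (hp0 : 0 < p) (hp1 : p ≤ 1) (N : ℕ) :
    ∑ k ∈ Finset.range N, ((k:ℝ) + 1) ^ (p - 1) ≤ (N:ℝ) ^ p / p := by
  induction N with
  | zero => simp [Real.zero_rpow hp0.ne']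
  | succ N ih =>
    rw [Finset.sum_range_succ]
    have hstep := KR_step_pos hp0 hp1 (j := (N:ℝ) + 1)
      (by have : (0:ℝ) ≤ (N:ℝ) := Nat.cast_nonneg N; linarith)
    have hc : ((N:ℝ) + 1) - 1 = (N:ℝ) := by ring
    rw [hc] at hstep
    push_cast
    have h3 : (N:ℝ) ^ p / p + ((((N:ℝ)+1) ^ p - (N:ℝ) ^ p)) / p = ((N:ℝ)+1) ^ p / p := by
      rw [← add_div]; congr 1; ring
    linarith [ih, hstep]

private lemma KR_tail_partial {p : ℝ} (hp : p < 0) (K : ℕ) (hK : 1 ≤ K) (N : ℕ) :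
    ∑ k ∈ Finset.range N, ((K:ℝ) + 1 + k) ^ (p - 1) ≤
      ((K:ℝ) ^ p - ((K:ℝ) + N) ^ p) / (-p) := by
  induction N with
  | zero => simp
  | succ N ih =>
    rw [Finset.sum_range_succ]
    have hstep := KR_step_neg hp (j := (K:ℝ) + 1 + N)
      (by have : (1:ℝ) ≤ (K:ℝ) := by exact_mod_cast hK
          have : (0:ℝ) ≤ (N:ℝ) := Nat.cast_nonneg N
          linarith)
    have hc : ((K:ℝ) + 1 + N) - 1 = (K:ℝ) + N := by ring
    rw [hc] at hstep
    push_cast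
    have h3 : ((K:ℝ) ^ p - ((K:ℝ)+N) ^ p) / (-p) + (((K:ℝ)+N) ^ p - ((K:ℝ)+1+N) ^ p) / (-p)
        = ((K:ℝ) ^ p - ((K:ℝ) + ((N:ℝ)+1)) ^ p) / (-p) := by
      rw [← add_div]; congr 1
      · ring_nf
    linarith [ih, hstep]

private lemma KR_tail_tsum {p : ℝ} (hp : p < 0) (K : ℕ) (hK : 1 ≤ K) :
    ∑' k : ℕ, ((K:ℝ) + 1 + k) ^ (p - 1) ≤ (K:ℝ) ^ p / (-p) := by
  apply Real.tsum_le_of_sum_range_le (fun k => Real.rpow_nonneg (by positivity) _)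
  intro N
  refine (KR_tail_partial hp K hK N).trans ?_
  have h1 : (0:ℝ) ≤ ((K:ℝ) + N) ^ p := Real.rpow_nonneg (by positivity) _
  have h2 : (0:ℝ) < -p := by linarith
  gcongr
  linarith

private lemma KR_summable_shift {t : ℝ} (ht : t < -1) :
    Summable (fun k : ℕ => ((k:ℝ) + 1) ^ t) := by
  have h := Real.summable_nat_rpow.2 ht
  have h2 := (summable_nat_add_iff 1).2 h
  refine h2.congr fun k => ?_
  push_cast
  ring_nf

set_option maxHeartbeats 2000000 in
private lemma KR_core (n : ℕ) (hn : 1 ≤ n) (E σ : ℝ) (hσ : -1 < σ) (hEσ : 1 < E - σ) (hE : 0 < E)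
    (α β γ : ℝ) (hα : 0 < α) (hβ : 0 < β) (hγ : γ ≠ 0) :
    ∃ C : ℝ, ∀ μ : ℝ, 0 < μ → ∀ muk : ℕ → ℝ,
      (∀ k : ℕ, 0 < muk k ∧
        ((2 * (k : ℝ) + n) * muk k) ^ α + (muk k) ^ (2 * β) = μ ^ (1 / γ)) →
      ((μ ^ ((1 / α - 1 / (2 * β)) / γ) ≤ 1 →
          ∑' k : ℕ, μ⁻¹ * (muk k) ^ E * (2 * (k : ℝ) + n) ^ σ ≤
            C * μ ^ (E / (α * γ) - 1)) ∧
       (1 < μ ^ ((1 / α - 1 / (2 * β)) / γ) →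
          ∑' k : ℕ, μ⁻¹ * (muk k) ^ E * (2 * (k : ℝ) + n) ^ σ ≤
            C * μ ^ (E / (2 * β * γ) + (1 / γ) * (1 / α - 1 / (2 * β)) * (σ + 1) - 1))) := by
  have hα' : α ≠ 0 := ne_of_gt hα
  have hβ' : β ≠ 0 := ne_of_gt hβ
  set t : ℝ := σ - E with ht_def
  have ht : t < -1 := by rw [ht_def]; linarith
  have ht0' : t < 0 := by linarith
  have htp : t + 1 < 0 := by linarith
  have hσ1 : (0:ℝ) < σ + 1 := by linarith
  have hZsum : Summable (fun k : ℕ => ((k:ℝ) + 1) ^ t) := KR_summable_shift ht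
  set Z : ℝ := ∑' k : ℕ, ((k:ℝ) + 1) ^ t with hZ_def
  have hZ0 : 0 ≤ Z := tsum_nonneg fun k => Real.rpow_nonneg (by positivity) _
  set Cs : ℝ := 2 / (σ + 1) + 2 with hCs_def
  have hCs0 : 0 ≤ Cs := by positivity
  have hnt : (0:ℝ) < -(t+1) := by linarith
  set Ct : ℝ := (2:ℝ) ^ (-t) * (1 + (-(t+1))⁻¹) with hCt_def
  have hCt0 : 0 ≤ Ct := by positivity
  refine ⟨Z + Cs + Ct, ?_⟩
  intro μ hμ muk hmuk
  have hμ0 : (0:ℝ) ≤ μ := hμ.le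
  have hmuk0 : ∀ k, (0:ℝ) < muk k := fun k => (hmuk k).1
  have hm1 : ∀ k : ℕ, (k:ℝ) + 1 ≤ 2 * (k:ℝ) + n := by
    intro k
    have h1 : (1:ℝ) ≤ (n:ℝ) := by exact_mod_cast hn
    have h2 : (0:ℝ) ≤ (k:ℝ) := Nat.cast_nonneg k
    linarith
  have hm0 : ∀ k : ℕ, (0:ℝ) < 2 * (k:ℝ) + n := fun k =>
    lt_of_lt_of_le (by positivity) (hm1 k)
  have hYa : ∀ k : ℕ, (2 * (k:ℝ) + n) * muk k ≤ μ ^ (1 / (α * γ)) := by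
    intro k
    obtain ⟨hpos, heq⟩ := hmuk k
    have h2 : (0:ℝ) < (muk k) ^ (2 * β) := Real.rpow_pos_of_pos hpos _
    have hXα : ((2 * (k:ℝ) + n) * muk k) ^ α ≤ μ ^ (1/γ) := by linarith
    by_contra hlt
    push_neg at hlt
    have hY0 : (0:ℝ) < μ ^ (1 / (α * γ)) := Real.rpow_pos_of_pos hμ _
    have h3 := Real.rpow_lt_rpow hY0.le hlt hα
    rw [← Real.rpow_mul hμ0] at h3
    have he : 1/(α*γ) * α = 1/γ := by field_simp
    rw [he] at h3
    linarith
  have hYb : ∀ k : ℕ, muk k ≤ μ ^ (1 / (2 * β * γ)) := by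
    intro k
    obtain ⟨hpos, heq⟩ := hmuk k
    have h2 : (0:ℝ) < ((2 * (k:ℝ) + n) * muk k) ^ α :=
      Real.rpow_pos_of_pos (mul_pos (hm0 k) hpos) _
    have hXβ : (muk k) ^ (2*β) ≤ μ ^ (1/γ) := by linarith
    by_contra hlt
    push_neg at hlt
    have hY0 : (0:ℝ) < μ ^ (1 / (2 * β * γ)) := Real.rpow_pos_of_pos hμ _
    have h3 := Real.rpow_lt_rpow hY0.le hlt (by positivity : (0:ℝ) < 2*β)
    rw [← Real.rpow_mul hμ0] at h3
    have he : 1/(2*β*γ) * (2*β) = 1/γ := by field_simp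
    rw [he] at h3
    linarith
  have hmukE : ∀ k : ℕ, (muk k) ^ E ≤ μ ^ (E / (α * γ)) * (2*(k:ℝ)+n) ^ (-E) := by
    intro k
    have hdiv : muk k ≤ μ ^ (1/(α*γ)) / (2*(k:ℝ)+n) := by
      rw [le_div_iff₀ (hm0 k)]
      calc muk k * (2*(k:ℝ)+n) = (2*(k:ℝ)+n) * muk k := by ring
        _ ≤ _ := hYa k
    calc (muk k) ^ E ≤ (μ ^ (1/(α*γ)) / (2*(k:ℝ)+n)) ^ E :=
          Real.rpow_le_rpow (hmuk0 k).le hdiv hE.le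
      _ = μ ^ (E/(α*γ)) * (2*(k:ℝ)+n) ^ (-E) := by
          rw [Real.div_rpow (Real.rpow_nonneg hμ0 _) (hm0 k).le, ← Real.rpow_mul hμ0,
              Real.rpow_neg (hm0 k).le, div_eq_mul_inv]
          congr 2
          ring
  have hmukE2 : ∀ k : ℕ, (muk k) ^ E ≤ μ ^ (E / (2 * β * γ)) := by
    intro k
    calc (muk k) ^ E ≤ (μ ^ (1/(2*β*γ))) ^ E :=
          Real.rpow_le_rpow (hmuk0 k).le (hYb k) hE.le
      _ = μ ^ (E/(2*β*γ)) := by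
          rw [← Real.rpow_mul hμ0]
          congr 1
          ring
  have hb1 : ∀ k : ℕ, μ⁻¹ * (muk k) ^ E * (2*(k:ℝ)+n) ^ σ ≤
      μ ^ (E/(α*γ) - 1) * (2*(k:ℝ)+n) ^ t := by
    intro k
    have h1 : (muk k)^E * (2*(k:ℝ)+n) ^ σ ≤ μ ^ (E/(α*γ)) * (2*(k:ℝ)+n) ^ t := by
      calc (muk k)^E * (2*(k:ℝ)+n) ^ σ
          ≤ (μ ^ (E/(α*γ)) * (2*(k:ℝ)+n) ^ (-E)) * (2*(k:ℝ)+n) ^ σ :=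
            mul_le_mul_of_nonneg_right (hmukE k) (Real.rpow_nonneg (hm0 k).le _)
        _ = μ ^ (E/(α*γ)) * (2*(k:ℝ)+n) ^ t := by
            rw [mul_assoc, ← Real.rpow_add (hm0 k)]
            congr 2
            rw [ht_def]; ring
    calc μ⁻¹ * (muk k) ^ E * (2*(k:ℝ)+n) ^ σ
        = μ⁻¹ * ((muk k) ^ E * (2*(k:ℝ)+n) ^ σ) := by ring
      _ ≤ μ⁻¹ * (μ ^ (E/(α*γ)) * (2*(k:ℝ)+n) ^ t) :=
          mul_le_mul_of_nonneg_left h1 (inv_nonneg.2 hμ0)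
      _ = μ ^ (E/(α*γ) - 1) * (2*(k:ℝ)+n) ^ t := by
          rw [show μ⁻¹ = μ ^ (-1 : ℝ) from (Real.rpow_neg_one μ).symm, ← mul_assoc,
              ← Real.rpow_add hμ]
          congr 2
          ring
  have hpt1 : ∀ k : ℕ, μ⁻¹ * (muk k) ^ E * (2*(k:ℝ)+n) ^ σ ≤
      μ ^ (E/(α*γ) - 1) * ((k:ℝ)+1) ^ t := by
    intro k
    refine (hb1 k).trans (mul_le_mul_of_nonneg_left ?_ (Real.rpow_nonneg hμ0 _))
    exact Real.rpow_le_rpow_of_nonpos (by positivity) (hm1 k) ht0'.le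
  have hterm0 : ∀ k : ℕ, 0 ≤ μ⁻¹ * (muk k) ^ E * (2*(k:ℝ)+n) ^ σ := fun k =>
    mul_nonneg (mul_nonneg (inv_nonneg.2 hμ0) (Real.rpow_nonneg (hmuk0 k).le _))
      (Real.rpow_nonneg (hm0 k).le _)
  have hmaj : Summable (fun k : ℕ => μ ^ (E/(α*γ) - 1) * ((k:ℝ)+1) ^ t) := hZsum.mul_left _
  have hsumL : Summable (fun k : ℕ => μ⁻¹ * (muk k) ^ E * (2*(k:ℝ)+n) ^ σ) :=
    Summable.of_nonneg_of_le hterm0 hpt1 hmaj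
  constructor
  · intro _
    calc ∑' k : ℕ, μ⁻¹ * (muk k) ^ E * (2*(k:ℝ)+n) ^ σ
        ≤ ∑' k : ℕ, μ ^ (E/(α*γ)-1) * ((k:ℝ)+1) ^ t := Summable.tsum_le_tsum hpt1 hsumL hmaj
      _ = μ ^ (E/(α*γ)-1) * Z := tsum_mul_left
      _ ≤ (Z + Cs + Ct) * μ ^ (E/(α*γ)-1) := by
          have h0 : (0:ℝ) ≤ μ ^ (E/(α*γ)-1) := Real.rpow_nonneg hμ0 _
          nlinarith [mul_nonneg hCs0 h0, mul_nonneg hCt0 h0]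
  · intro hM
    set M : ℝ := μ ^ ((1/α - 1/(2*β))/γ) with hM_def
    have hM0 : (0:ℝ) < M := Real.rpow_pos_of_pos hμ _
    have hM1 : (1:ℝ) ≤ M := hM.le
    set K : ℕ := ⌈M⌉₊ with hK_def
    have hK1 : 1 ≤ K := by
      rw [hK_def, Nat.one_le_ceil_iff]
      exact hM0
    have hK1' : (1:ℝ) ≤ (K:ℝ) := by exact_mod_cast hK1
    have hKM : M ≤ (K:ℝ) := Nat.le_ceil M
    have hKM2 : (K:ℝ) ≤ M + 1 := by
      have := Nat.ceil_lt_add_one (le_of_lt hM0)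
      linarith
    set N₀ : ℕ := ⌊M⌋₊ + 1 with hN_def
    have hN0M : M < (N₀:ℝ) := by
      rw [hN_def]
      push_cast
      exact Nat.lt_floor_add_one M
    have hN02M : (N₀:ℝ) ≤ 2*M := by
      rw [hN_def]
      push_cast
      have := Nat.floor_le (le_of_lt hM0)
      linarith
    set F : ℕ → ℝ := fun k => if 2*(k:ℝ)+n ≤ M then (2*(k:ℝ)+n) ^ σ else 0 with hF_def
    set G : ℕ → ℝ := fun k => if M < 2*(k:ℝ)+n then (2*(k:ℝ)+n) ^ t else 0 with hG_def
    have hF0 : ∀ k, 0 ≤ F k := by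
      intro k
      rw [hF_def]
      dsimp only
      split_ifs
      · exact Real.rpow_nonneg (hm0 k).le _
      · exact le_refl 0
    have hG0 : ∀ k, 0 ≤ G k := by
      intro k
      rw [hG_def]
      dsimp only
      split_ifs
      · exact Real.rpow_nonneg (hm0 k).le _
      · exact le_refl 0
    have hkltN : ∀ k : ℕ, 2*(k:ℝ)+n ≤ M → k < N₀ := by
      intro k hk
      by_contra hcon
      push_neg at hcon
      have : (N₀:ℝ) ≤ (k:ℝ) := by exact_mod_cast hcon
      linarith [hm1 k, hN0M]
    have hpt2 : ∀ k : ℕ, μ⁻¹ * (muk k) ^ E * (2*(k:ℝ)+n) ^ σ ≤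
        μ ^ (E/(2*β*γ) - 1) * (F k + M ^ E * G k) := by
      intro k
      by_cases hk : 2*(k:ℝ)+n ≤ M
      · have hFk : F k = (2*(k:ℝ)+n) ^ σ := by rw [hF_def]; exact if_pos hk
        have hGk : G k = 0 := by rw [hG_def]; exact if_neg (not_lt.2 hk)
        rw [hFk, hGk, mul_zero, add_zero]
        calc μ⁻¹ * (muk k)^E * (2*(k:ℝ)+n)^σ
            = μ⁻¹ * (muk k)^E * (2*(k:ℝ)+n)^σ := rfl
          _ ≤ μ⁻¹ * μ^(E/(2*β*γ)) * (2*(k:ℝ)+n)^σ := by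
              apply mul_le_mul_of_nonneg_right ?_ (Real.rpow_nonneg (hm0 k).le _)
              exact mul_le_mul_of_nonneg_left (hmukE2 k) (inv_nonneg.2 hμ0)
          _ = μ^(E/(2*β*γ) - 1) * (2*(k:ℝ)+n)^σ := by
              rw [show μ⁻¹ = μ ^ (-1 : ℝ) from (Real.rpow_neg_one μ).symm,
                  ← Real.rpow_add hμ]
              congr 2
              ring
      · push_neg at hk
        have hFk : F k = 0 := by rw [hF_def]; exact if_neg (not_le.2 hk)
        have hGk : G k = (2*(k:ℝ)+n) ^ t := by rw [hG_def]; exact if_pos hk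
        rw [hFk, hGk, zero_add]
        have h2 : μ^(E/(α*γ) - 1) = μ^(E/(2*β*γ) - 1) * M^E := by
          rw [hM_def, ← Real.rpow_mul hμ0, ← Real.rpow_add hμ]
          congr 1
          field_simp
          ring
        refine (hb1 k).trans (le_of_eq ?_)
        rw [h2, mul_assoc]
    have hGle : ∀ k, G k ≤ ((k:ℝ)+1)^t := by
      intro k
      rw [hG_def]
      dsimp only
      split_ifs
      · exact Real.rpow_le_rpow_of_nonpos (by positivity) (hm1 k) ht0'.le
      · exact Real.rpow_nonneg (by positivity) _
    have hGsum : Summable G := Summable.of_nonneg_of_le hG0 hGle hZsum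
    have hFsum : Summable F := by
      apply summable_of_ne_finset_zero (s := Finset.range N₀)
      intro k hk
      rw [Finset.mem_range, not_lt] at hk
      rw [hF_def]
      dsimp only
      apply if_neg
      intro hcon
      exact absurd (hkltN k hcon) (not_lt.2 hk)
    have hFsum_le : ∑' k, F k ≤ Cs * M ^ (σ+1) := by
      apply Real.tsum_le_of_sum_range_le hF0
      intro N
      by_cases hσs : σ ≤ 0
      · have hmaj2 : ∀ k ∈ Finset.range N, F k ≤ (if k < N₀ then ((k:ℝ)+1) ^ σ else 0) := by
          intro k _
          rw [hF_def]
          dsimp only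
          by_cases h1 : 2*(k:ℝ)+n ≤ M
          · rw [if_pos h1, if_pos (hkltN k h1)]
            exact Real.rpow_le_rpow_of_nonpos (by positivity) (hm1 k) hσs
          · rw [if_neg h1]
            split_ifs
            · exact Real.rpow_nonneg (by positivity) _
            · exact le_refl 0
        calc ∑ k ∈ Finset.range N, F k
            ≤ ∑ k ∈ Finset.range N, (if k < N₀ then ((k:ℝ)+1) ^ σ else 0) :=
              Finset.sum_le_sum hmaj2
          _ = ∑ k ∈ (Finset.range N).filter (· < N₀), ((k:ℝ)+1) ^ σ :=
              (Finset.sum_filter _ _).symm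
          _ ≤ ∑ k ∈ Finset.range N₀, ((k:ℝ)+1) ^ σ := by
              apply Finset.sum_le_sum_of_subset_of_nonneg
              · intro x hx
                simp only [Finset.mem_filter, Finset.mem_range] at hx ⊢
                exact hx.2
              · intros
                exact Real.rpow_nonneg (by positivity) _
          _ ≤ (N₀:ℝ) ^ (σ+1) / (σ+1) := by
              have h := KR_partial_sum hσ1 (by linarith : σ+1 ≤ 1) N₀
              simpa using h
          _ ≤ Cs * M ^ (σ+1) := by
              have h1 : (N₀:ℝ) ^ (σ+1) ≤ 2 * M ^ (σ+1) := by
                calc (N₀:ℝ) ^ (σ+1) ≤ (2*M) ^ (σ+1) :=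
                      Real.rpow_le_rpow (Nat.cast_nonneg _) hN02M hσ1.le
                  _ = 2 ^ (σ+1) * M ^ (σ+1) := Real.mul_rpow (by norm_num) hM0.le
                  _ ≤ 2 * M ^ (σ+1) := by
                      apply mul_le_mul_of_nonneg_right ?_ (Real.rpow_nonneg hM0.le _)
                      calc (2:ℝ) ^ (σ+1) ≤ (2:ℝ) ^ (1:ℝ) :=
                            Real.rpow_le_rpow_of_exponent_le one_le_two (by linarith)
                        _ = 2 := Real.rpow_one 2
              have h2 : (0:ℝ) ≤ M ^ (σ+1) := Real.rpow_nonneg hM0.le _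
              calc (N₀:ℝ) ^ (σ+1) / (σ+1) ≤ (2 * M ^ (σ+1)) / (σ+1) := by gcongr
                _ = (2/(σ+1)) * M ^ (σ+1) := by ring
                _ ≤ Cs * M ^ (σ+1) := by
                    rw [hCs_def]
                    nlinarith [h2]

      · push_neg at hσs
        have hmaj2 : ∀ k ∈ Finset.range N, F k ≤ (if k < N₀ then M ^ σ else 0) := by
          intro k _
          rw [hF_def]
          dsimp only
          by_cases h1 : 2*(k:ℝ)+n ≤ M
          · rw [if_pos h1, if_pos (hkltN k h1)]
            exact Real.rpow_le_rpow (hm0 k).le h1 hσs.le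
          · rw [if_neg h1]
            split_ifs
            · exact Real.rpow_nonneg hM0.le _
            · exact le_refl 0
        calc ∑ k ∈ Finset.range N, F k
            ≤ ∑ k ∈ Finset.range N, (if k < N₀ then M ^ σ else 0) :=
              Finset.sum_le_sum hmaj2
          _ = ∑ k ∈ (Finset.range N).filter (· < N₀), M ^ σ :=
              (Finset.sum_filter _ _).symm
          _ ≤ ∑ k ∈ Finset.range N₀, M ^ σ := by
              apply Finset.sum_le_sum_of_subset_of_nonneg
              · intro x hx
                simp only [Finset.mem_filter, Finset.mem_range] at hx ⊢
                exact hx.2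
              · intros
                exact Real.rpow_nonneg hM0.le _
          _ = (N₀:ℝ) * M ^ σ := by
              rw [Finset.sum_const, Finset.card_range, nsmul_eq_mul]
          _ ≤ Cs * M ^ (σ+1) := by
              have h3 : M ^ (σ+1) = M ^ σ * M := Real.rpow_add_one hM0.ne' σ
              have h4 : (0:ℝ) ≤ M ^ σ := Real.rpow_nonneg hM0.le _
              have h5 : (0:ℝ) ≤ 2 / (σ+1) := by positivity
              have h6 : (N₀:ℝ) * M ^ σ ≤ 2 * M * M ^ σ :=
                mul_le_mul_of_nonneg_right hN02M h4
              rw [hCs_def, h3]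
              nlinarith [mul_nonneg (mul_nonneg h5 h4) (le_trans zero_le_one hM1)]
    have hH : ∀ k : ℕ, G k ≤ (2:ℝ)^(-t) * ((K:ℝ) + k) ^ t := by
      intro k
      rw [hG_def]
      dsimp only
      split_ifs with h1
      · have hge : (M + (k:ℝ) + 1)/2 ≤ 2*(k:ℝ)+n := by
          have := hm1 k
          linarith
        have hpos : (0:ℝ) < (M + (k:ℝ) + 1)/2 := by positivity
        calc (2*(k:ℝ)+n)^t ≤ ((M + (k:ℝ) + 1)/2) ^ t :=
              Real.rpow_le_rpow_of_nonpos hpos hge ht0'.le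
          _ = (2:ℝ)^(-t) * (M + (k:ℝ) + 1) ^ t := by
              rw [Real.div_rpow (by positivity) (by norm_num), Real.rpow_neg (by norm_num)]
              ring
          _ ≤ (2:ℝ)^(-t) * ((K:ℝ) + k) ^ t := by
              apply mul_le_mul_of_nonneg_left ?_ (Real.rpow_nonneg (by norm_num) _)
              apply Real.rpow_le_rpow_of_nonpos (by positivity) ?_ ht0'.le
              linarith [hKM2]
      · positivity
    have hKk_sum : Summable (fun k : ℕ => ((K:ℝ) + k) ^ t) := by
      apply Summable.of_nonneg_of_le (fun k => Real.rpow_nonneg (by positivity) _) ?_ hZsum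
      intro k
      apply Real.rpow_le_rpow_of_nonpos (by positivity) ?_ ht0'.le
      linarith
    have htail : ∑' k : ℕ, ((K:ℝ) + k) ^ t ≤ (1 + (-(t+1))⁻¹) * M ^ (t+1) := by
      rw [Summable.tsum_eq_zero_add hKk_sum]
      have h1 : ∑' k : ℕ, ((K:ℝ) + ((k + 1 : ℕ):ℝ)) ^ t ≤ (K:ℝ)^(t+1) / (-(t+1)) := by
        have h := KR_tail_tsum htp K hK1
        have he : ∀ k : ℕ, ((K:ℝ) + 1 + k) ^ ((t+1) - 1) = ((K:ℝ) + ((k + 1 : ℕ):ℝ)) ^ t := by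
          intro k
          push_cast
          rw [add_sub_cancel_right]
          ring_nf
        rw [tsum_congr he] at h
        exact h
      have h2 : ((K:ℝ) + ((0:ℕ):ℝ)) ^ t ≤ M ^ (t+1) := by
        push_cast
        rw [add_zero]
        calc (K:ℝ) ^ t ≤ (K:ℝ) ^ (t+1) :=
              Real.rpow_le_rpow_of_exponent_le hK1' (by linarith)
          _ ≤ M ^ (t+1) := Real.rpow_le_rpow_of_nonpos hM0 hKM htp.le
      have h3 : (K:ℝ)^(t+1) / (-(t+1)) ≤ M ^ (t+1) * (-(t+1))⁻¹ := by
        rw [div_eq_mul_inv]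
        apply mul_le_mul_of_nonneg_right ?_ (by positivity)
        exact Real.rpow_le_rpow_of_nonpos hM0 hKM htp.le
      have h4 := le_trans (add_le_add h2 h1) (add_le_add_right h3 _)
      calc ((K:ℝ) + ((0:ℕ):ℝ)) ^ t + ∑' k : ℕ, ((K:ℝ) + ((k + 1 : ℕ):ℝ)) ^ t
          ≤ M ^ (t+1) + M ^ (t+1) * (-(t+1))⁻¹ := h4
        _ = (1 + (-(t+1))⁻¹) * M ^ (t+1) := by ring
    have hGsum_le : ∑' k, G k ≤ Ct * M ^ (t+1) := by
      calc ∑' k, G k ≤ ∑' k : ℕ, (2:ℝ)^(-t) * ((K:ℝ) + k) ^ t :=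
            Summable.tsum_le_tsum hH hGsum (hKk_sum.mul_left _)
        _ = (2:ℝ)^(-t) * ∑' k : ℕ, ((K:ℝ) + k) ^ t := tsum_mul_left
        _ ≤ (2:ℝ)^(-t) * ((1 + (-(t+1))⁻¹) * M ^ (t+1)) :=
            mul_le_mul_of_nonneg_left htail (Real.rpow_nonneg (by norm_num) _)
        _ = Ct * M ^ (t+1) := by rw [hCt_def]; ring
    have hMsum : Summable (fun k => μ^(E/(2*β*γ)-1) * (F k + M^E * G k)) :=
      ((hFsum.add (hGsum.mul_left _)).mul_left _)
    calc ∑' k : ℕ, μ⁻¹ * (muk k) ^ E * (2*(k:ℝ)+n) ^ σ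
        ≤ ∑' k : ℕ, μ^(E/(2*β*γ)-1) * (F k + M^E * G k) := Summable.tsum_le_tsum hpt2 hsumL hMsum
      _ = μ^(E/(2*β*γ)-1) * ((∑' k, F k) + M^E * ∑' k, G k) := by
          rw [tsum_mul_left, Summable.tsum_add hFsum (hGsum.mul_left _), tsum_mul_left]
      _ ≤ μ^(E/(2*β*γ)-1) * (Cs * M^(σ+1) + M^E * (Ct * M^(t+1))) := by
          apply mul_le_mul_of_nonneg_left ?_ (Real.rpow_nonneg hμ0 _)
          have h2 : M^E * (∑' k, G k) ≤ M^E * (Ct * M^(t+1)) :=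
            mul_le_mul_of_nonneg_left hGsum_le (Real.rpow_nonneg hM0.le _)
          linarith [hFsum_le, h2]
      _ = (Cs + Ct) * (μ^(E/(2*β*γ)-1) * M^(σ+1)) := by
          have hME : M^E * M^(t+1) = M^(σ+1) := by
            rw [← Real.rpow_add hM0]
            congr 1
            rw [ht_def]
            ring
          rw [show M ^ E * (Ct * M ^ (t+1)) = Ct * (M^E * M^(t+1)) from by ring, hME]
          ring
      _ = (Cs + Ct) * μ^(E/(2*β*γ) + (1/γ)*(1/α - 1/(2*β))*(σ+1) - 1) := by
          rw [hM_def, ← Real.rpow_mul hμ0, ← Real.rpow_add hμ]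
          congr 2
          ring
      _ ≤ (Z + Cs + Ct) * μ^(E/(2*β*γ) + (1/γ)*(1/α - 1/(2*β))*(σ+1) - 1) := by
          have h0 : (0:ℝ) ≤ μ^(E/(2*β*γ) + (1/γ)*(1/α - 1/(2*β))*(σ+1) - 1) :=
            Real.rpow_nonneg hμ0 _
          nlinarith [mul_nonneg hZ0 h0]
private lemma KR_phi_eq_max (n : ℕ) (s : ℝ) :
    phiKR n s = max (-s/2) ((n:ℝ)*s - 1/2) := by
  unfold phiKR
  have hn0 : (0:ℝ) < 2*(n:ℝ)+1 := by positivity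
  split_ifs with h
  · rw [le_div_iff₀ hn0] at h
    symm
    apply max_eq_left
    nlinarith
  · push_neg at h
    rw [div_lt_iff₀ hn0] at h
    symm
    apply max_eq_right
    nlinarith


set_option maxHeartbeats 2000000 in
/-- Analytic core of Theorem 2.10: with `μ_k` the unique positive solution of
`((2k+n)λ)^α + λ^(2β) = μ^(1/γ)`, `E = n(1/p−1/q) + d(1/r−1/r′)`,
`σ = φ(1/p−1/2) + φ(1/2−1/q)`, `B = E/(αγ) − 1` and
`A = E/(2βγ) + (1/γ)(1/α − 1/(2β))(σ+1) − 1`, one has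
`Σ_k μ⁻¹ μ_k^E (2k+n)^σ ≤ C μ^B` if `μ^{(1/α−1/(2β))/γ} ≤ 1` and `≤ C μ^A` otherwise. -/
theorem series_bound_homogeneous (n d : ℕ) (hn : 1 ≤ n) (hd : 1 ≤ d)
    (α β γ : ℝ) (hα : 0 < α) (hβ : 0 < β) (hγ : γ ≠ 0)
    (p r : ℝ) (q : ℝ≥0∞)
    (hp1 : 1 ≤ p) (hp2 : p ≤ 2) (hq : 2 ≤ q)
    (hr1 : 1 ≤ r) (hr2 : r ≤ 2 * (d + 1) / (d + 3))
    (hne : ¬(d = 1 ∧ p = 2 ∧ q = 2)) :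
    ∃ C : ℝ, ∀ μ : ℝ, 0 < μ → ∀ muk : ℕ → ℝ,
      (∀ k : ℕ, 0 < muk k ∧
        ((2 * (k : ℝ) + n) * muk k) ^ α + (muk k) ^ (2 * β) = μ ^ (1 / γ)) →
      (let E : ℝ := n * (1 / p - (q⁻¹).toReal) + d * (1 / r - (1 - 1 / r))
       let σ : ℝ := phiKR n (1 / p - 1 / 2) + phiKR n (1 / 2 - (q⁻¹).toReal)
       (μ ^ ((1 / α - 1 / (2 * β)) / γ) ≤ 1 →
          ∑' k : ℕ, μ⁻¹ * (muk k) ^ E * (2 * (k : ℝ) + n) ^ σ ≤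
            C * μ ^ (E / (α * γ) - 1)) ∧
       (1 < μ ^ ((1 / α - 1 / (2 * β)) / γ) →
          ∑' k : ℕ, μ⁻¹ * (muk k) ^ E * (2 * (k : ℝ) + n) ^ σ ≤
            C * μ ^ (E / (2 * β * γ) + (1 / γ) * (1 / α - 1 / (2 * β)) * (σ + 1) - 1))) := by
  have hp0 : (0:ℝ) < p := lt_of_lt_of_le one_pos hp1
  have hr0 : (0:ℝ) < r := lt_of_lt_of_le one_pos hr1
  have hn1 : (1:ℝ) ≤ (n:ℝ) := by exact_mod_cast hn
  have hD1 : (1:ℝ) ≤ (d:ℝ) := by exact_mod_cast hd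
  have hD0 : (0:ℝ) < (d:ℝ) + 1 := by linarith
  set qi : ℝ := (q⁻¹).toReal with hqi_def
  have hqi0 : 0 ≤ qi := ENNReal.toReal_nonneg
  have hqi2 : qi ≤ 1/2 := by
    have h2 : q⁻¹ ≤ (2:ℝ≥0∞)⁻¹ := ENNReal.inv_le_inv.2 hq
    have h3 := ENNReal.toReal_mono (by simp) h2
    rw [hqi_def]
    refine h3.trans_eq ?_
    rw [ENNReal.toReal_inv]
    norm_num
  have hs1a : 0 ≤ 1/p - 1/2 := by
    have := one_div_le_one_div_of_le hp0 hp2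
    linarith
  have hs1b : 1/p - 1/2 ≤ 1/2 := by
    have : 1/p ≤ 1 := by rw [div_le_one hp0]; exact hp1
    linarith
  have hs2a : 0 ≤ 1/2 - qi := by linarith
  have hs2b : 1/2 - qi ≤ 1/2 := by linarith
  have hmax1 := KR_phi_eq_max n (1/p - 1/2)
  have hmax2 := KR_phi_eq_max n (1/2 - qi)
  have hφ1low : -(1/p - 1/2)/2 ≤ phiKR n (1/p - 1/2) := by
    rw [hmax1]; exact le_max_left _ _
  have hφ2low : -(1/2 - qi)/2 ≤ phiKR n (1/2 - qi) := by
    rw [hmax2]; exact le_max_left _ _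
  have hφ1up : phiKR n (1/p - 1/2) ≤ (n:ℝ)*(1/p - 1/2) := by
    rw [hmax1]; apply max_le
    · nlinarith
    · nlinarith
  have hφ2up : phiKR n (1/2 - qi) ≤ (n:ℝ)*(1/2 - qi) := by
    rw [hmax2]; apply max_le
    · nlinarith
    · nlinarith
  have hφ1lt : 0 < 1/p - 1/2 → phiKR n (1/p - 1/2) < (n:ℝ)*(1/p - 1/2) := by
    intro h
    rw [hmax1]; apply max_lt
    · nlinarith
    · nlinarith
  have hφ2lt : 0 < 1/2 - qi → phiKR n (1/2 - qi) < (n:ℝ)*(1/2 - qi) := by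
    intro h
    rw [hmax2]; apply max_lt
    · nlinarith
    · nlinarith
  have hσgt : -1 < phiKR n (1/p - 1/2) + phiKR n (1/2 - qi) := by linarith
  have h1r : ((d:ℝ)+3)/(2*((d:ℝ)+1)) ≤ 1/r := by
    have h := one_div_le_one_div_of_le hr0 hr2
    rwa [one_div_div] at h
  have h2r : 2/((d:ℝ)+1) ≤ 1/r - (1 - 1/r) := by
    have hid : ((d:ℝ)+3)/(2*((d:ℝ)+1)) * 2 - 1 = 2/((d:ℝ)+1) := by
      field_simp
      ring
    linarith
  have hB : (d:ℝ)*(2/((d:ℝ)+1)) ≤ (d:ℝ)*(1/r - (1-1/r)) :=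
    mul_le_mul_of_nonneg_left h2r (by linarith)
  have hDD : 1 ≤ (d:ℝ) * (2/((d:ℝ)+1)) := by
    rw [show (d:ℝ)*(2/((d:ℝ)+1)) = 2*(d:ℝ)/((d:ℝ)+1) from by ring, le_div_iff₀ hD0]
    linarith
  have hsplit : 1/p - qi = (1/p - 1/2) + (1/2 - qi) := by ring
  have hA0 : 0 ≤ (n:ℝ)*(1/p - qi) :=
    mul_nonneg (by linarith) (by rw [hsplit]; linarith)
  have hE : 0 < (n:ℝ)*(1/p - qi) + (d:ℝ)*(1/r - (1 - 1/r)) := by linarith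
  have hEσ : 1 < ((n:ℝ)*(1/p - qi) + (d:ℝ)*(1/r - (1-1/r)))
      - (phiKR n (1/p-1/2) + phiKR n (1/2-qi)) := by
    have hup : phiKR n (1/p-1/2) + phiKR n (1/2-qi) ≤ (n:ℝ)*(1/p - qi) := by
      rw [hsplit, mul_add]
      linarith
    rcases eq_or_lt_of_le hd with hd1 | hd2
    · have hne' : ¬(p = 2 ∧ q = 2) := fun hc => hne ⟨hd1.symm, hc⟩
      have hstrict : phiKR n (1/p-1/2) + phiKR n (1/2-qi) < (n:ℝ)*(1/p - qi) := by
        rcases Classical.em (p = 2) with hp2' | hp2'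
        · have hq2 : q ≠ 2 := fun hc => hne' ⟨hp2', hc⟩
          have hqlt : 2 < q := lt_of_le_of_ne hq (Ne.symm hq2)
          have hqi_lt : qi < 1/2 := by
            have h5 : q⁻¹ < (2:ℝ≥0∞)⁻¹ := ENNReal.inv_lt_inv.2 hqlt
            have h6 := ENNReal.toReal_strict_mono (by simp) h5
            rw [hqi_def]
            refine h6.trans_eq ?_
            rw [ENNReal.toReal_inv]
            norm_num
          have h7 := hφ2lt (by linarith)
          rw [hsplit, mul_add]
          linarith
        · have hplt : p < 2 := lt_of_le_of_ne hp2 hp2'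
          have h8 : 1/2 < 1/p := by
            have := one_div_lt_one_div_of_lt hp0 hplt
            linarith
          have h7 := hφ1lt (by linarith)
          rw [hsplit, mul_add]
          linarith
      linarith
    · have hd2' : (2:ℝ) ≤ (d:ℝ) := by exact_mod_cast hd2
      have h43 : (4/3:ℝ) ≤ 2*(d:ℝ)/((d:ℝ)+1) := by
        rw [le_div_iff₀ hD0]
        linarith
      have heq : 2*(d:ℝ)/((d:ℝ)+1) = (d:ℝ)*(2/((d:ℝ)+1)) := by ring
      linarith
  obtain ⟨C, hC⟩ := KR_core n hn
    ((n:ℝ)*(1/p - qi) + (d:ℝ)*(1/r - (1 - 1/r)))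
    (phiKR n (1/p-1/2) + phiKR n (1/2-qi))
    hσgt hEσ hE α β γ hα hβ hγ
  exact ⟨C, fun μ hμ muk hmuk => hC μ hμ muk hmuk⟩
end

section
/- Let n, d ≥ 1 be integers, let α, β > 0 and γ ≠ 0, and let p, q, r satisfy 1 ≤ p ≤ 2 ≤ q ≤ ∞, 1 ≤ r ≤ 2(d+1)/(d+3), and not simultaneously d = 1, p = 2, q = 2. For μ > 0 with μ^{1/γ} ≥ 2 and each integer k ≥ 0 let μ_k be the unique λ > 0 with 1 + ((2k+n)λ)^α + λ^{2β} = μ^{1/γ}. Set E = n(1/p − 1/q) + d(1/r − 1/r′), σ = φ(1/p − 1/2) + φ(1/2 − 1/q), B = E/(αγ) − 1, and A = E/(2βγ) + (1/γ)(1/α − 1/(2β))(σ + 1) − 1. Then there is a constant C (depending on n, d, p, q, r, α, β, γ) such that for every μ > 0 with μ^{1/γ} ≥ 2: Σ_{k=0}^{∞} μ^{−1} μ_k^{E} (2k+n)^{σ} ≤ C μ^{B} whenever μ^{(1/α − 1/(2β))/γ} ≤ 1, and Σ_{k=0}^{∞} μ^{−1} μ_k^{E} (2k+n)^{σ} ≤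 C μ^{A} whenever μ^{(1/α − 1/(2β))/γ} > 1. -/
open scoped ENNReal

set_option maxHeartbeats 1000000

open Real Finset

lemma phiKR_le_mul (n : ℕ) {s : ℝ} (hs : 0 ≤ s) : phiKR n s ≤ n * s := by
  have hn0 : (0:ℝ) ≤ n := Nat.cast_nonneg n
  unfold phiKR
  split
  · nlinarith
  · linarith

lemma phiKR_lt_mul {n : ℕ} (hn : 1 ≤ n) {s : ℝ} (hs : 0 < s) : phiKR n s < n * s := by
  have hn1 : (1:ℝ) ≤ n := by exact_mod_cast hn
  unfold phiKR
  split
  · nlinarith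
  · linarith

lemma phiKR_ge {n : ℕ} (hn : 1 ≤ n) {s : ℝ} (hs0 : 0 ≤ s) (hs : s ≤ 1/2) :
    -(1/4 : ℝ) ≤ phiKR n s := by
  have hn1 : (1:ℝ) ≤ n := by exact_mod_cast hn
  unfold phiKR
  split
  · linarith
  · rename_i h
    push_neg at h
    have hden : (0:ℝ) < 2*n+1 := by linarith
    have h2 : (1:ℝ)/3 ≤ n/(2*n+1) := by
      rw [div_le_div_iff₀ (by norm_num) hden]; linarith
    have h3 : (n:ℝ)/(2*n+1) = n * (1/(2*n+1)) := by ring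
    have h4 : (n:ℝ) * (1/(2*n+1)) ≤ n * s := by
      apply mul_le_mul_of_nonneg_left h.le (by linarith)
    nlinarith

lemma my_summable_shift {c : ℝ} (hc : c < -1) :
    Summable (fun k : ℕ => ((k:ℝ)+1)^c) := by
  have h := (summable_nat_add_iff 1).mpr (Real.summable_nat_rpow.mpr hc)
  exact h.congr (fun k => by push_cast; ring_nf)

/-- Bernoulli's inequality for nonpositive exponents. -/
lemma my_bernoulli_nonpos {z p : ℝ} (hz1 : -1 < z) (hz2 : z ≤ 0) (hp : p ≤ 0) :
    1 + p * z ≤ (1 + z) ^ p := by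
  have h1z : 0 < 1 + z := by linarith
  rcases le_or_gt 1 (-p) with hq | hq
  · set w : ℝ := -z / (1 + z) with hw
    have hw0 : 0 ≤ w := div_nonneg (by linarith) h1z.le
    have hmul : 1 + z = (1 + w)⁻¹ := by
      have h : (1 + z) * (1 + w) = 1 := by rw [hw]; field_simp <;> ring
      exact eq_inv_of_mul_eq_one_left h
    have hb : 1 + (-p) * w ≤ (1 + w) ^ (-p) :=
      one_add_mul_self_le_rpow_one_add (by linarith) hq
    have hkey : (1 + z) ^ p = (1 + w) ^ (-p) := by
      rw [hmul, ← Real.rpow_neg_one (1+w), ← Real.rpow_mul (by positivity)]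
      norm_num
    rw [hkey]
    refine le_trans ?_ hb
    have hzw : 0 ≤ z + w := by
      have : z + w = z ^ 2 / (1 + z) := by rw [hw]; field_simp <;> ring
      rw [this]; positivity
    nlinarith
  · have hq0 : 0 ≤ -p := by linarith
    have hb : (1 + z) ^ (-p) ≤ 1 + (-p) * z :=
      rpow_one_add_le_one_add_mul_self hz1.le hq0 hq.le
    have ht : 0 < 1 + (-p) * z := by nlinarith
    have hkey : (1 + z) ^ p = ((1 + z) ^ (-p))⁻¹ := by
      rw [← Real.rpow_neg h1z.le, neg_neg]
    rw [hkey]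
    have h2 : (1 + (-p) * z)⁻¹ ≤ ((1 + z) ^ (-p))⁻¹ := by
      apply inv_anti₀ _ hb
      exact (rpow_pos_of_pos h1z _)
    refine le_trans ?_ h2
    rw [← one_div, le_div_iff₀ ht]
    nlinarith [sq_nonneg (p * z)]

lemma my_tail_step {c x : ℝ} (hc : c < -1) (hx : 1 ≤ x) :
    (-(c+1)) * (x+1)^c ≤ x^(c+1) - (x+1)^(c+1) := by
  have hx1 : (0:ℝ) < x + 1 := by linarith
  set z : ℝ := -1/(x+1) with hz
  have hz1 : -1 < z := by
    rw [hz, neg_div]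
    have : 1/(x+1) < 1 := by rw [div_lt_one hx1]; linarith
    linarith
  have hz2 : z ≤ 0 := by
    rw [hz]; exact div_nonpos_of_nonpos_of_nonneg (by norm_num) hx1.le
  have hb := my_bernoulli_nonpos hz1 hz2 (show c+1 ≤ 0 by linarith)
  have hm : (x+1)*(1+z) = x := by rw [hz]; field_simp; ring
  have hzx : (x+1)*z = -1 := by rw [hz]; field_simp
  have h1 : ((x+1)*(1+z))^(c+1) = (x+1)^(c+1)*(1+z)^(c+1) :=
    Real.mul_rpow hx1.le (by linarith)
  have key : (x+1)^(c+1) * (1 + (c+1)*z) ≤ x^(c+1) := by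
    calc (x+1)^(c+1) * (1 + (c+1)*z) ≤ (x+1)^(c+1)*(1+z)^(c+1) :=
          mul_le_mul_of_nonneg_left hb (Real.rpow_pos_of_pos hx1 _).le
      _ = x^(c+1) := by rw [← h1, hm]
  have hsplit : (x+1)^(c+1) = (x+1)^c * (x+1) := by
    rw [Real.rpow_add hx1, Real.rpow_one]
  have e1 : (x+1)^(c+1) * (1+(c+1)*z) = (x+1)^(c+1) - (c+1)*(x+1)^c := by
    rw [hsplit]; linear_combination ((c+1) * (x+1)^c) * hzx
  linarith [e1 ▸ key]

lemma my_head_step {p x : ℝ} (h0 : 0 < p) (h1 : p ≤ 1) (hx : 0 ≤ x) :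
    p * (x+1)^(p-1) ≤ (x+1)^p - x^p := by
  have hx1 : (0:ℝ) < x + 1 := by linarith
  set z : ℝ := -1/(x+1) with hz
  have hz1 : -1 ≤ z := by
    rw [hz, neg_div]
    have : 1/(x+1) ≤ 1 := by rw [div_le_one hx1]; linarith
    linarith
  have hb := rpow_one_add_le_one_add_mul_self hz1 h0.le h1
  have hm : (x+1)*(1+z) = x := by rw [hz]; field_simp; ring
  have hzx : (x+1)*z = -1 := by rw [hz]; field_simp
  have hz0 : 0 ≤ 1 + z := by
    have : z = -1/(x+1) := hz
    nlinarith [div_le_one_of_le₀ (show (1:ℝ) ≤ x+1 by linarith) hx1.le]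
  have h2 : ((x+1)*(1+z))^p = (x+1)^p*(1+z)^p := Real.mul_rpow hx1.le hz0
  have key : x^p ≤ (x+1)^p * (1 + p*z) := by
    calc x^p = (x+1)^p*(1+z)^p := by rw [← h2, hm]
      _ ≤ (x+1)^p * (1 + p*z) :=
          mul_le_mul_of_nonneg_left hb (Real.rpow_pos_of_pos hx1 _).le
  have hsplit : (x+1)^p = (x+1)^(p-1) * (x+1) := by
    have h := Real.rpow_add_one (ne_of_gt hx1) (p-1)
    rw [sub_add_cancel] at h
    exact h
  have e1 : (x+1)^p * (1+p*z) = (x+1)^p - p*(x+1)^(p-1) := by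
    rw [hsplit]; linear_combination (p * (x+1)^(p-1)) * hzx
  linarith [e1 ▸ key]

lemma my_head_sum {p : ℝ} (h0 : 0 < p) (h1 : p ≤ 1) (N : ℕ) :
    ∑ k ∈ Finset.range N, ((k:ℝ)+1)^(p-1) ≤ (N:ℝ)^p / p := by
  induction N with
  | zero => simp [Real.zero_rpow h0.ne']
  | succ N ih =>
      rw [Finset.sum_range_succ]
      have hstep := my_head_step h0 h1 (Nat.cast_nonneg N : (0:ℝ) ≤ N)
      have h2 : ((N:ℝ)+1)^(p-1) ≤ (((N:ℝ)+1)^p - (N:ℝ)^p)/p := by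
        rw [le_div_iff₀ h0]; linarith
      push_cast
      have h3 : ((N:ℝ)+1)^p/p = (N:ℝ)^p/p + (((N:ℝ)+1)^p - (N:ℝ)^p)/p := by ring
      rw [h3]
      exact add_le_add ih h2

lemma my_tail_sum' {c : ℝ} (hc : c < -1) {m : ℝ} (hm : 1 ≤ m) (N : ℕ) :
    ∑ j ∈ Finset.range N, (m + (j:ℝ) + 1)^c ≤ (m^(c+1) - (m+(N:ℝ))^(c+1))/(-(c+1)) := by
  have hδ : (0:ℝ) < -(c+1) := by linarith
  induction N with
  | zero => simp
  | succ N ih =>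
      rw [Finset.sum_range_succ]
      have hN0 : (0:ℝ) ≤ (N:ℝ) := Nat.cast_nonneg N
      have hstep := my_tail_step hc (show (1:ℝ) ≤ m + N by linarith)
      have h4 : (m + (N:ℝ) + 1)^c ≤ ((m+(N:ℝ))^(c+1) - (m+(N:ℝ)+1)^(c+1))/(-(c+1)) := by
        rw [le_div_iff₀ hδ]
        calc (m + (N:ℝ) + 1)^c * -(c+1) = (-(c+1)) * ((m+(N:ℝ))+1)^c := by ring_nf
          _ ≤ (m+(N:ℝ))^(c+1) - ((m+(N:ℝ))+1)^(c+1) := hstep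
          _ = (m+(N:ℝ))^(c+1) - (m+(N:ℝ)+1)^(c+1) := by ring_nf
      push_cast
      have h5 : (m^(c+1) - (m+((N:ℝ)+1))^(c+1))/(-(c+1)) =
          (m^(c+1) - (m+(N:ℝ))^(c+1))/(-(c+1)) +
          ((m+(N:ℝ))^(c+1) - (m+(N:ℝ)+1)^(c+1))/(-(c+1)) := by
        rw [← add_div]; ring_nf
      rw [h5]
      exact add_le_add ih h4

lemma my_tail_sum {c : ℝ} (hc : c < -1) {m : ℝ} (hm : 1 ≤ m) (N : ℕ) :
    ∑ j ∈ Finset.range N, (m + (j:ℝ))^c ≤ (1 + 1/(-(c+1))) * m^(c+1) := by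
  have hd : (0:ℝ) < -(c+1) := by linarith
  have hm0 : (0:ℝ) < m := by linarith
  have hmp : (0:ℝ) < m^(c+1) := Real.rpow_pos_of_pos hm0 _
  have h1d : (0:ℝ) < 1/(-(c+1)) := by positivity
  have hrw : (1 + 1/(-(c+1))) * m^(c+1) = m^(c+1)/(-(c+1)) + m^(c+1) := by ring
  rw [hrw]
  cases N with
  | zero =>
      simp only [Finset.sum_range_zero]
      have h2 : 0 ≤ m^(c+1)/(-(c+1)) := div_nonneg hmp.le hd.le
      linarith
  | succ N =>
      rw [Finset.sum_range_succ']
      have hcongr : ∀ j ∈ Finset.range N,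
          (m + (((j+1:ℕ)):ℝ))^c = (m + (j:ℝ) + 1)^c := by
        intro j _; push_cast; ring_nf
      have h1 : ∑ j ∈ Finset.range N, (m + (((j+1:ℕ)):ℝ))^c ≤ m^(c+1)/(-(c+1)) := by
        rw [Finset.sum_congr rfl hcongr]
        refine (my_tail_sum' hc hm N).trans ?_
        have hnn : (0:ℝ) ≤ (m+(N:ℝ))^(c+1) := Real.rpow_nonneg (by positivity) _
        rw [sub_div]
        have : 0 ≤ (m+(N:ℝ))^(c+1)/(-(c+1)) := div_nonneg hnn hd.le
        linarith
      have h0 : (m + ((0:ℕ):ℝ))^c ≤ m^(c+1) := by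
        simp only [Nat.cast_zero, add_zero]
        exact Real.rpow_le_rpow_of_exponent_le hm (by linarith)
      exact add_le_add h1 h0

lemma my_tail_fin {c : ℝ} (hc : c < -1) {M : ℕ} (hM : 1 ≤ M) (N : ℕ) :
    ∑ k ∈ Finset.range N, (if M ≤ k + 1 then ((k:ℝ)+1)^c else 0)
      ≤ (1 + 1/(-(c+1))) * (M:ℝ)^(c+1) := by
  rw [← Finset.sum_filter]
  have hset : (Finset.range N).filter (fun k => M ≤ k+1) = Finset.Ico (M-1) N := by
    ext k; simp only [Finset.mem_filter, Finset.mem_range, Finset.mem_Ico]; omega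
  rw [hset, Finset.sum_Ico_eq_sum_range]
  have hm1 : (1:ℝ) ≤ (M:ℝ) := by exact_mod_cast hM
  have hcongr : ∀ j ∈ Finset.range (N - (M-1)),
      (((M-1+j:ℕ):ℝ)+1)^c = ((M:ℝ)+(j:ℝ))^c := by
    intro j _
    have h : (M-1+j)+1 = M+j := by omega
    have h2 : ((M-1+j:ℕ):ℝ)+1 = (M:ℝ)+(j:ℝ) := by exact_mod_cast h
    rw [h2]
  rw [Finset.sum_congr rfl hcongr]
  exact my_tail_sum hc hm1 _

lemma my_head_fin {σ T : ℝ} (hσ : -1 < σ) (hT : 1 ≤ T) {n : ℕ} (hn : 1 ≤ n) (N : ℕ) :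
    ∑ k ∈ Finset.range N, (if 2*(k:ℝ)+(n:ℝ) ≤ T then (2*(k:ℝ)+(n:ℝ))^σ else 0)
      ≤ (2 + 2/(σ+1)) * T^(σ+1) := by
  have hT0 : (0:ℝ) < T := by linarith
  have hTp : (0:ℝ) < T^(σ+1) := Real.rpow_pos_of_pos hT0 _
  have hσ1 : 0 < σ+1 := by linarith
  have hn1 : (1:ℝ) ≤ (n:ℝ) := by exact_mod_cast hn
  set N' := ⌈T⌉₊ with hN'
  have hN'le : (N' : ℝ) ≤ 2*T := by
    have := Nat.ceil_lt_add_one hT0.le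
    linarith
  have hkN' : ∀ k : ℕ, 2*(k:ℝ)+(n:ℝ) ≤ T → k < N' := by
    intro k hk
    have h1 : (k:ℝ) < T := by linarith [Nat.cast_nonneg (α := ℝ) k]
    have h2 : (k:ℝ) < (N':ℝ) := lt_of_lt_of_le h1 (Nat.le_ceil T)
    exact_mod_cast h2
  have hxpos : ∀ k : ℕ, (0:ℝ) < 2*(k:ℝ)+(n:ℝ) := by
    intro k; have := Nat.cast_nonneg (α := ℝ) k; linarith
  by_cases hσ0 : 0 ≤ σ
  · have hpt : ∀ k ∈ Finset.range N,
        (if 2*(k:ℝ)+(n:ℝ) ≤ T then (2*(k:ℝ)+(n:ℝ))^σ else 0)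
          ≤ (if k < N' then T^σ else 0) := by
      intro k _
      by_cases hk : 2*(k:ℝ)+(n:ℝ) ≤ T
      · rw [if_pos hk, if_pos (hkN' k hk)]
        exact Real.rpow_le_rpow (hxpos k).le hk hσ0
      · rw [if_neg hk]
        split <;> positivity
    refine (Finset.sum_le_sum hpt).trans ?_
    rw [← Finset.sum_filter]
    have hsub : (Finset.range N).filter (fun k => k < N') ⊆ Finset.range N' := by
      intro k hk
      simp only [Finset.mem_filter, Finset.mem_range] at hk ⊢
      exact hk.2
    refine (Finset.sum_le_sum_of_subset_of_nonneg hsub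
      (fun k _ _ => (Real.rpow_pos_of_pos hT0 σ).le)).trans ?_
    rw [Finset.sum_const, Finset.card_range, nsmul_eq_mul]
    have hTT : T^σ * T = T^(σ+1) := (Real.rpow_add_one hT0.ne' σ).symm
    have hTσ : (0:ℝ) < T^σ := Real.rpow_pos_of_pos hT0 σ
    have h5 : (N':ℝ) * T^σ ≤ 2*T*T^σ := mul_le_mul_of_nonneg_right hN'le hTσ.le
    have h6 : 2*T*T^σ = 2*T^(σ+1) := by rw [← hTT]; ring
    have h7 : 0 ≤ 2/(σ+1) := by positivity
    nlinarith
  · push_neg at hσ0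
    have hpt : ∀ k ∈ Finset.range N,
        (if 2*(k:ℝ)+(n:ℝ) ≤ T then (2*(k:ℝ)+(n:ℝ))^σ else 0)
          ≤ (if k < N' then ((k:ℝ)+1)^σ else 0) := by
      intro k _
      by_cases hk : 2*(k:ℝ)+(n:ℝ) ≤ T
      · rw [if_pos hk, if_pos (hkN' k hk)]
        apply Real.rpow_le_rpow_of_nonpos (by positivity)
          (by linarith [Nat.cast_nonneg (α := ℝ) k]) hσ0.le
      · rw [if_neg hk]
        split <;> positivity
    refine (Finset.sum_le_sum hpt).trans ?_
    rw [← Finset.sum_filter]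
    have hsub : (Finset.range N).filter (fun k => k < N') ⊆ Finset.range N' := by
      intro k hk
      simp only [Finset.mem_filter, Finset.mem_range] at hk ⊢
      exact hk.2
    refine (Finset.sum_le_sum_of_subset_of_nonneg hsub
      (fun k _ _ => by positivity)).trans ?_
    have hcongr : ∀ k ∈ Finset.range N', ((k:ℝ)+1)^σ = ((k:ℝ)+1)^((σ+1)-1) := by
      intro k _; norm_num
    rw [Finset.sum_congr rfl hcongr]
    refine (my_head_sum hσ1 (by linarith) N').trans ?_
    have h8 : (N':ℝ)^(σ+1) ≤ (2*T)^(σ+1) :=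
      Real.rpow_le_rpow (Nat.cast_nonneg N') hN'le hσ1.le
    have h9 : (2*T)^(σ+1) = 2^(σ+1) * T^(σ+1) := Real.mul_rpow (by norm_num) hT0.le
    have h10 : (2:ℝ)^(σ+1) ≤ 2 := by
      have := Real.rpow_le_rpow_of_exponent_le (one_le_two (α := ℝ)) (show σ+1 ≤ 1 by linarith)
      rwa [Real.rpow_one] at this
    have hnum : (N':ℝ)^(σ+1) ≤ 2*T^(σ+1) := by nlinarith
    have h11 : (N':ℝ)^(σ+1)/(σ+1) ≤ (2*T^(σ+1))/(σ+1) := by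
      have hd := div_nonneg (sub_nonneg.mpr hnum) hσ1.le
      rw [sub_div] at hd; linarith
    refine h11.trans ?_
    rw [div_le_iff₀ hσ1]
    have h12 : 0 < 2/(σ+1) := by positivity
    have h13 : (2 + 2/(σ+1)) * T^(σ+1) * (σ+1) = 2*T^(σ+1)*(σ+1) + 2*T^(σ+1) := by
      field_simp
    nlinarith


/-- Analytic core of the first two cases of Theorem 2.11 (regime `μ^{1/γ} ≥ 2`):
with `μ_k` the unique positive solution of `1 + ((2k+n)λ)^α + λ^(2β) = μ^(1/γ)`,
`E = n(1/p−1/q) + d(1/r−1/r′)`, `σ = φ(1/p−1/2) + φ(1/2−1/q)`, `B = E/(αγ) − 1` and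
`A = E/(2βγ) + (1/γ)(1/α − 1/(2β))(σ+1) − 1`, one has
`Σ_k μ⁻¹ μ_k^E (2k+n)^σ ≤ C μ^B` if `μ^{(1/α−1/(2β))/γ} ≤ 1` and `≤ C μ^A` otherwise. -/
theorem series_bound_inhomogeneous_large (n d : ℕ) (hn : 1 ≤ n) (hd : 1 ≤ d)
    (α β γ : ℝ) (hα : 0 < α) (hβ : 0 < β) (hγ : γ ≠ 0)
    (p r : ℝ) (q : ℝ≥0∞)
    (hp1 : 1 ≤ p) (hp2 : p ≤ 2) (hq : 2 ≤ q)
    (hr1 : 1 ≤ r) (hr2 : r ≤ 2 * (d + 1) / (d + 3))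
    (hne : ¬(d = 1 ∧ p = 2 ∧ q = 2)) :
    ∃ C : ℝ, ∀ μ : ℝ, 0 < μ → 2 ≤ μ ^ (1 / γ) → ∀ muk : ℕ → ℝ,
      (∀ k : ℕ, 0 < muk k ∧
        1 + ((2 * (k : ℝ) + n) * muk k) ^ α + (muk k) ^ (2 * β) = μ ^ (1 / γ)) →
      (let E : ℝ := n * (1 / p - (q⁻¹).toReal) + d * (1 / r - (1 - 1 / r))
       let σ : ℝ := phiKR n (1 / p - 1 / 2) + phiKR n (1 / 2 - (q⁻¹).toReal)
       (μ ^ ((1 / α - 1 / (2 * β)) / γ) ≤ 1 →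
          ∑' k : ℕ, μ⁻¹ * (muk k) ^ E * (2 * (k : ℝ) + n) ^ σ ≤
            C * μ ^ (E / (α * γ) - 1)) ∧
       (1 < μ ^ ((1 / α - 1 / (2 * β)) / γ) →
          ∑' k : ℕ, μ⁻¹ * (muk k) ^ E * (2 * (k : ℝ) + n) ^ σ ≤
            C * μ ^ (E / (2 * β * γ) + (1 / γ) * (1 / α - 1 / (2 * β)) * (σ + 1) - 1))) := by
  have hp0 : (0:ℝ) < p := lt_of_lt_of_le one_pos hp1
  have hr0 : (0:ℝ) < r := lt_of_lt_of_le one_pos hr1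
  have hn1 : (1:ℝ) ≤ (n:ℝ) := by exact_mod_cast hn
  have hd1 : (1:ℝ) ≤ (d:ℝ) := by exact_mod_cast hd
  set t : ℝ := (q⁻¹).toReal with ht
  have ht0 : 0 ≤ t := ENNReal.toReal_nonneg
  have ht2 : t ≤ 1/2 := by
    have htinv : q⁻¹ ≤ 2⁻¹ := ENNReal.inv_le_inv.mpr hq
    have h := ENNReal.toReal_mono (by norm_num) htinv
    rw [ht]
    refine h.trans_eq ?_
    simp [ENNReal.toReal_inv]
  have hs1a : (0:ℝ) ≤ 1/p - 1/2 := by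
    have := one_div_le_one_div_of_le hp0 hp2
    linarith
  have hs1b : 1/p - 1/2 ≤ 1/2 := by
    have h := one_div_le_one_div_of_le one_pos hp1
    rw [one_div_one] at h
    linarith
  have hs2a : (0:ℝ) ≤ 1/2 - t := by linarith
  have hs2b : 1/2 - t ≤ 1/2 := by linarith
  set SIG : ℝ := phiKR n (1 / p - 1 / 2) + phiKR n (1 / 2 - t) with hSIG
  set EE : ℝ := (n:ℝ) * (1 / p - t) + (d:ℝ) * (1 / r - (1 - 1 / r)) with hEE
  -- lower bound on σ
  have hσlb : -(1/2 : ℝ) ≤ SIG := by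
    have h1 := phiKR_ge hn hs1a hs1b
    have h2 := phiKR_ge hn hs2a hs2b
    rw [hSIG]; linarith
  -- the key gap estimate
  have hd1' : (0:ℝ) < (d:ℝ)+1 := by linarith
  have hr2' : r*((d:ℝ)+3) ≤ 2*((d:ℝ)+1) := by
    rw [le_div_iff₀ (by linarith : (0:ℝ) < (d:ℝ)+3)] at hr2
    linarith
  have hkey : 2/((d:ℝ)+1) ≤ 2/r - 1 := by
    have h2r : ((d:ℝ)+3)/((d:ℝ)+1) ≤ 2/r := by
      rw [div_le_div_iff₀ hd1' hr0]; linarith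
    have h3 : ((d:ℝ)+3)/((d:ℝ)+1) = 2/((d:ℝ)+1) + 1 := by field_simp; ring
    linarith
  have hdkey : 1 ≤ (d:ℝ)*(2/r - 1) := by
    have h1 : 1 ≤ (d:ℝ)*(2/((d:ℝ)+1)) := by
      rw [mul_div_assoc', le_div_iff₀ hd1']; linarith
    have h2 : (d:ℝ)*(2/((d:ℝ)+1)) ≤ d*(2/r-1) :=
      mul_le_mul_of_nonneg_left hkey (by positivity)
    linarith
  have hφ1 : phiKR n (1/p-1/2) ≤ (n:ℝ)*(1/p-1/2) := phiKR_le_mul n hs1a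
  have hφ2 : phiKR n (1/2-t) ≤ (n:ℝ)*(1/2-t) := phiKR_le_mul n hs2a
  have hEexp : EE = (n:ℝ)*(1/p-1/2) + (n:ℝ)*(1/2-t) + (d:ℝ)*(2/r-1) := by
    rw [hEE]; ring
  have hEσ : SIG + 1 < EE := by
    by_cases hd2 : 2 ≤ d
    · have hd2' : (2:ℝ) ≤ (d:ℝ) := by exact_mod_cast hd2
      have h1 : (4:ℝ)/3 ≤ (d:ℝ)*(2/((d:ℝ)+1)) := by
        rw [mul_div_assoc', div_le_div_iff₀ (by norm_num) hd1']; linarith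
      have h2 : (d:ℝ)*(2/((d:ℝ)+1)) ≤ d*(2/r-1) :=
        mul_le_mul_of_nonneg_left hkey (by positivity)
      rw [hSIG, hEexp]; linarith
    · have hd1eq : d = 1 := by omega
      have hdR : (d:ℝ) = 1 := by rw [hd1eq]; norm_num
      clear hd2
      by_cases hp2' : p = 2
      · have hq2' : q ≠ 2 := fun h => hne ⟨hd1eq, hp2', h⟩
        have hqlt : (2:ℝ≥0∞) < q := lt_of_le_of_ne hq (Ne.symm hq2')
        have hinv : q⁻¹ < 2⁻¹ := ENNReal.inv_lt_inv.mpr hqlt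
        have hq0 : q ≠ 0 := by
          intro h; rw [h] at hq; simp at hq
        have hqtop : q⁻¹ ≠ ⊤ := ENNReal.inv_ne_top.mpr hq0
        have ht' : t < 1/2 := by
          have h5 := (ENNReal.toReal_lt_toReal hqtop (by norm_num)).mpr hinv
          rw [ht]
          refine h5.trans_eq ?_
          simp [ENNReal.toReal_inv]
        have hs2pos : (0:ℝ) < 1/2 - t := by linarith
        have hφ2' := phiKR_lt_mul hn hs2pos
        rw [hSIG, hEexp]
        have : (d:ℝ)*(2/r-1) ≥ 1 := hdkey
        linarith
      · have hplt : p < 2 := lt_of_le_of_ne hp2 hp2'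
        have hs1pos : (0:ℝ) < 1/p - 1/2 := by
          have := one_div_lt_one_div_of_lt hp0 hplt
          linarith
        have hφ1' := phiKR_lt_mul hn hs1pos
        rw [hSIG, hEexp]
        linarith
  have hσgt : (-1:ℝ) < SIG := lt_of_lt_of_le (by norm_num) hσlb
  have hc : SIG - EE < -1 := by linarith
  have hδ : (0:ℝ) < -((SIG-EE)+1) := by linarith
  have hE0 : (0:ℝ) ≤ EE := by linarith
  -- the constants
  set C1 : ℝ := ∑' k : ℕ, ((k:ℝ)+1)^(SIG-EE) with hC1
  set Chead : ℝ := 2 + 2/(SIG+1) with hChead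
  set Ctail : ℝ := (1 + 1/(-((SIG-EE)+1))) * ((n:ℝ)+2)^(-((SIG-EE)+1)) with hCtail
  have hC1nn : 0 ≤ C1 := tsum_nonneg (fun k => Real.rpow_nonneg (by positivity) _)
  have hCheadnn : 0 ≤ Chead := by
    rw [hChead]
    have : 0 < 2/(SIG+1) := by
      apply div_pos (by norm_num); linarith
    linarith
  have hCtailnn : 0 ≤ Ctail := by
    rw [hCtail]
    have h1 : 0 < 1/(-((SIG-EE)+1)) := one_div_pos.mpr hδ
    have h2 : (0:ℝ) < ((n:ℝ)+2)^(-((SIG-EE)+1)) := Real.rpow_pos_of_pos (by linarith) _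
    exact mul_nonneg (by linarith) h2.le
  refine ⟨C1 + Chead + Ctail, ?_⟩
  intro μ hμ hν2 muk hmuk
  intro E σ
  have hEd : E = EE := rfl
  have hσd : σ = SIG := rfl
  set ν : ℝ := μ ^ (1/γ) with hν
  have hν0 : (0:ℝ) < ν := Real.rpow_pos_of_pos hμ _
  have hνpow : ∀ x : ℝ, μ ^ ((1/γ)*x) = ν ^ x := by
    intro x; rw [Real.rpow_mul hμ.le, ← hν]
  have hx1 : ∀ k : ℕ, (1:ℝ) ≤ 2*(k:ℝ)+(n:ℝ) := by
    intro k; have := Nat.cast_nonneg (α := ℝ) k; linarith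
  have hxk : ∀ k : ℕ, (k:ℝ)+1 ≤ 2*(k:ℝ)+(n:ℝ) := by
    intro k; have := Nat.cast_nonneg (α := ℝ) k; linarith
  have hxup : ∀ k : ℕ, 2*(k:ℝ)+(n:ℝ) ≤ ((n:ℝ)+2)*((k:ℝ)+1) := by
    intro k
    have hk0 : (0:ℝ) ≤ (k:ℝ) := Nat.cast_nonneg k
    have hnk : (0:ℝ) ≤ (n:ℝ)*(k:ℝ) := mul_nonneg (by linarith) hk0
    linarith
  have hmu1 : ∀ k : ℕ, (2*(k:ℝ)+(n:ℝ)) * muk k ≤ ν^(1/α) := by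
    intro k
    obtain ⟨h0, heq⟩ := hmuk k
    have hxpos : (0:ℝ) < (2*(k:ℝ)+(n:ℝ)) * muk k :=
      mul_pos (lt_of_lt_of_le one_pos (hx1 k)) h0
    have hβpos : (0:ℝ) < muk k ^ (2*β) := Real.rpow_pos_of_pos h0 _
    have h2 : ((2*(k:ℝ)+(n:ℝ)) * muk k)^α ≤ ν := by linarith
    have h3 := Real.rpow_le_rpow (Real.rpow_nonneg hxpos.le α) h2
      (by positivity : (0:ℝ) ≤ 1/α)
    rwa [← Real.rpow_mul hxpos.le, mul_one_div_cancel hα.ne', Real.rpow_one] at h3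
  have hmu2 : ∀ k : ℕ, muk k ≤ ν^(1/(2*β)) := by
    intro k
    obtain ⟨h0, heq⟩ := hmuk k
    have hxpos : (0:ℝ) < (2*(k:ℝ)+(n:ℝ)) * muk k :=
      mul_pos (lt_of_lt_of_le one_pos (hx1 k)) h0
    have hαpos : (0:ℝ) < ((2*(k:ℝ)+(n:ℝ)) * muk k) ^ α := Real.rpow_pos_of_pos hxpos _
    have h2 : (muk k)^(2*β) ≤ ν := by linarith
    have h3 := Real.rpow_le_rpow (Real.rpow_nonneg h0.le (2*β)) h2
      (by positivity : (0:ℝ) ≤ 1/(2*β))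
    rwa [← Real.rpow_mul h0.le, mul_one_div_cancel (by positivity : (2:ℝ)*β ≠ 0),
      Real.rpow_one] at h3
  have hxpos' : ∀ k : ℕ, (0:ℝ) < 2*(k:ℝ)+(n:ℝ) := fun k => lt_of_lt_of_le one_pos (hx1 k)
  -- chain bound
  have hfle : ∀ k : ℕ, μ⁻¹ * muk k ^ EE * (2*(k:ℝ)+(n:ℝ))^SIG ≤
      μ⁻¹ * ν^(EE/α) * ((k:ℝ)+1)^(SIG-EE) := by
    intro k
    obtain ⟨h0, _⟩ := hmuk k
    have hdivle : muk k ≤ ν^(1/α) / (2*(k:ℝ)+(n:ℝ)) := by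
      rw [le_div_iff₀ (hxpos' k)]
      calc muk k * (2*(k:ℝ)+(n:ℝ)) = (2*(k:ℝ)+(n:ℝ)) * muk k := by ring
        _ ≤ ν^(1/α) := hmu1 k
    have h1 : muk k ^ EE ≤ (ν^(1/α) / (2*(k:ℝ)+(n:ℝ)))^EE :=
      Real.rpow_le_rpow h0.le hdivle hE0
    have h2 : (ν^(1/α) / (2*(k:ℝ)+(n:ℝ)))^EE
        = ν^(EE/α) / (2*(k:ℝ)+(n:ℝ))^EE := by
      rw [Real.div_rpow (Real.rpow_nonneg hν0.le _) (hxpos' k).le,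
        ← Real.rpow_mul hν0.le]
      congr 1
      ring
    have h3 : muk k ^ EE * (2*(k:ℝ)+(n:ℝ))^SIG ≤
        ν^(EE/α) * (2*(k:ℝ)+(n:ℝ))^(SIG-EE) := by
      have h4 : (0:ℝ) ≤ (2*(k:ℝ)+(n:ℝ))^SIG := Real.rpow_nonneg (hxpos' k).le _
      calc muk k ^ EE * (2*(k:ℝ)+(n:ℝ))^SIG
          ≤ (ν^(EE/α) / (2*(k:ℝ)+(n:ℝ))^EE) * (2*(k:ℝ)+(n:ℝ))^SIG := by
            rw [← h2]; exact mul_le_mul_of_nonneg_right h1 h4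
        _ = ν^(EE/α) * ((2*(k:ℝ)+(n:ℝ))^SIG / (2*(k:ℝ)+(n:ℝ))^EE) := by ring
        _ = ν^(EE/α) * (2*(k:ℝ)+(n:ℝ))^(SIG-EE) := by
            rw [← Real.rpow_sub (hxpos' k)]
    have h5 : (2*(k:ℝ)+(n:ℝ))^(SIG-EE) ≤ ((k:ℝ)+1)^(SIG-EE) :=
      Real.rpow_le_rpow_of_nonpos (by positivity) (hxk k) (by linarith)
    have h6 : (0:ℝ) ≤ ν^(EE/α) := Real.rpow_nonneg hν0.le _
    have h7 : muk k ^ EE * (2*(k:ℝ)+(n:ℝ))^SIG ≤ ν^(EE/α) * ((k:ℝ)+1)^(SIG-EE) :=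
      h3.trans (mul_le_mul_of_nonneg_left h5 h6)
    calc μ⁻¹ * muk k ^ EE * (2*(k:ℝ)+(n:ℝ))^SIG
        = μ⁻¹ * (muk k ^ EE * (2*(k:ℝ)+(n:ℝ))^SIG) := by ring
      _ ≤ μ⁻¹ * (ν^(EE/α) * ((k:ℝ)+1)^(SIG-EE)) :=
          mul_le_mul_of_nonneg_left h7 (inv_nonneg.mpr hμ.le)
      _ = μ⁻¹ * ν^(EE/α) * ((k:ℝ)+1)^(SIG-EE) := by ring
  have hfnn : ∀ k : ℕ, (0:ℝ) ≤ μ⁻¹ * muk k ^ EE * (2*(k:ℝ)+(n:ℝ))^SIG := by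
    intro k
    exact mul_nonneg (mul_nonneg (inv_nonneg.mpr hμ.le)
      (Real.rpow_nonneg (hmuk k).1.le _)) (Real.rpow_nonneg (hxpos' k).le _)
  have hgsum : Summable (fun k : ℕ => μ⁻¹ * ν^(EE/α) * ((k:ℝ)+1)^(SIG-EE)) :=
    (my_summable_shift hc).mul_left _
  have hfsum : Summable (fun k : ℕ => μ⁻¹ * muk k ^ EE * (2*(k:ℝ)+(n:ℝ))^SIG) :=
    Summable.of_nonneg_of_le hfnn hfle hgsum
  rw [hEd, hσd]
  constructor
  · -- case 1
    intro _
    have h1 : ∑' k : ℕ, μ⁻¹ * muk k ^ EE * (2*(k:ℝ)+(n:ℝ))^SIG ≤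
        ∑' k : ℕ, μ⁻¹ * ν^(EE/α) * ((k:ℝ)+1)^(SIG-EE) :=
      Summable.tsum_le_tsum hfle hfsum hgsum
    have h2 : ∑' k : ℕ, μ⁻¹ * ν^(EE/α) * ((k:ℝ)+1)^(SIG-EE)
        = μ⁻¹ * ν^(EE/α) * C1 := by
      rw [hC1, tsum_mul_left]
    have hrhs : μ^(EE/(α*γ)-1) = ν^(EE/α) * μ⁻¹ := by
      rw [Real.rpow_sub hμ, Real.rpow_one,
        show EE/(α*γ) = (1/γ)*(EE/α) by ring, hνpow, div_eq_mul_inv]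
    calc ∑' k : ℕ, μ⁻¹ * muk k ^ EE * (2*(k:ℝ)+(n:ℝ))^SIG
        ≤ μ⁻¹ * ν^(EE/α) * C1 := h1.trans_eq h2
      _ ≤ μ⁻¹ * ν^(EE/α) * (C1 + Chead + Ctail) := by
          apply mul_le_mul_of_nonneg_left (by linarith)
          exact mul_nonneg (inv_nonneg.mpr hμ.le) (Real.rpow_nonneg hν0.le _)
      _ = (C1 + Chead + Ctail) * μ^(EE/(α*γ)-1) := by rw [hrhs]; ring
  · -- case 2
    intro hcase
    set T : ℝ := ν^(1/α - 1/(2*β)) with hT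
    have hTeq : μ^((1/α-1/(2*β))/γ) = T := by
      rw [show (1/α-1/(2*β))/γ = (1/γ)*(1/α-1/(2*β)) by ring, hνpow, hT]
    have hT1 : (1:ℝ) < T := hTeq ▸ hcase
    have hT0 : (0:ℝ) < T := by linarith
    set M : ℕ := ⌈T/((n:ℝ)+2)⌉₊ with hM
    have hM1 : 1 ≤ M := by
      have : 0 < M := Nat.ceil_pos.mpr (by positivity)
      omega
    have hMge : T/((n:ℝ)+2) ≤ (M:ℝ) := Nat.le_ceil _
    -- the target rewritten
    have hrhs : μ^(EE/(2*β*γ) + (1/γ)*(1/α-1/(2*β))*(SIG+1) - 1)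
        = μ⁻¹ * (ν^(EE/(2*β)) * T^(SIG+1)) := by
      rw [Real.rpow_sub hμ, Real.rpow_one,
        show EE/(2*β*γ) + (1/γ)*(1/α-1/(2*β))*(SIG+1)
          = (1/γ)*(EE/(2*β)) + (1/γ)*((1/α-1/(2*β))*(SIG+1)) by ring,
        Real.rpow_add hμ, hνpow, hνpow,
        show ν^((1/α-1/(2*β))*(SIG+1)) = T^(SIG+1) by
          rw [hT, ← Real.rpow_mul hν0.le]]
      rw [div_eq_mul_inv]; ring
    rw [hrhs]
    apply Summable.tsum_le_of_sum_le hfsum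
    intro F
    obtain ⟨N, hFN⟩ := F.exists_nat_subset_range
    have hpt : ∀ k ∈ Finset.range N,
        μ⁻¹ * muk k ^ EE * (2*(k:ℝ)+(n:ℝ))^SIG ≤
          (μ⁻¹ * ν^(EE/(2*β))) *
            (if 2*(k:ℝ)+(n:ℝ) ≤ T then (2*(k:ℝ)+(n:ℝ))^SIG else 0) +
          (μ⁻¹ * ν^(EE/α)) *
            (if M ≤ k+1 then ((k:ℝ)+1)^(SIG-EE) else 0) := by
      intro k _
      by_cases hk : 2*(k:ℝ)+(n:ℝ) ≤ T
      · rw [if_pos hk]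
        have h1 : muk k ^ EE ≤ ν^(EE/(2*β)) := by
          have h2 := Real.rpow_le_rpow (hmuk k).1.le (hmu2 k) hE0
          rwa [← Real.rpow_mul hν0.le, show (1/(2*β))*EE = EE/(2*β) by ring] at h2
        have h3 : μ⁻¹ * muk k ^ EE * (2*(k:ℝ)+(n:ℝ))^SIG ≤
            (μ⁻¹ * ν^(EE/(2*β))) * (2*(k:ℝ)+(n:ℝ))^SIG := by
          have h4 : (0:ℝ) ≤ (2*(k:ℝ)+(n:ℝ))^SIG := Real.rpow_nonneg (hxpos' k).le _
          have h5 : μ⁻¹ * muk k ^ EE ≤ μ⁻¹ * ν^(EE/(2*β)) :=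
            mul_le_mul_of_nonneg_left h1 (inv_nonneg.mpr hμ.le)
          exact mul_le_mul_of_nonneg_right h5 h4
        have h6 : (0:ℝ) ≤ (μ⁻¹ * ν^(EE/α)) *
            (if M ≤ k+1 then ((k:ℝ)+1)^(SIG-EE) else 0) := by
          apply mul_nonneg (by positivity)
          split
          · exact Real.rpow_nonneg (by positivity) _
          · exact le_rfl
        linarith
      · push_neg at hk
        have hMk : M ≤ k+1 := by
          rw [hM]
          apply Nat.ceil_le.mpr
          rw [div_le_iff₀ (by linarith : (0:ℝ) < (n:ℝ)+2)]
          push_cast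
          linarith [hxup k]
        rw [if_neg (not_le.mpr hk), if_pos hMk, mul_zero, zero_add]
        calc μ⁻¹ * muk k ^ EE * (2*(k:ℝ)+(n:ℝ))^SIG
            ≤ μ⁻¹ * ν^(EE/α) * ((k:ℝ)+1)^(SIG-EE) := hfle k
          _ = (μ⁻¹ * ν^(EE/α)) * ((k:ℝ)+1)^(SIG-EE) := by ring
    calc ∑ k ∈ F, μ⁻¹ * muk k ^ EE * (2*(k:ℝ)+(n:ℝ))^SIG
        ≤ ∑ k ∈ Finset.range N, μ⁻¹ * muk k ^ EE * (2*(k:ℝ)+(n:ℝ))^SIG :=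
          Finset.sum_le_sum_of_subset_of_nonneg hFN (fun k _ _ => hfnn k)
      _ ≤ ∑ k ∈ Finset.range N,
            ((μ⁻¹ * ν^(EE/(2*β))) *
              (if 2*(k:ℝ)+(n:ℝ) ≤ T then (2*(k:ℝ)+(n:ℝ))^SIG else 0) +
            (μ⁻¹ * ν^(EE/α)) *
              (if M ≤ k+1 then ((k:ℝ)+1)^(SIG-EE) else 0)) :=
          Finset.sum_le_sum hpt
      _ = (μ⁻¹ * ν^(EE/(2*β))) *
            (∑ k ∈ Finset.range N, if 2*(k:ℝ)+(n:ℝ) ≤ T then (2*(k:ℝ)+(n:ℝ))^SIG else 0) +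
          (μ⁻¹ * ν^(EE/α)) *
            (∑ k ∈ Finset.range N, if M ≤ k+1 then ((k:ℝ)+1)^(SIG-EE) else 0) := by
          rw [Finset.sum_add_distrib, Finset.mul_sum, Finset.mul_sum]
      _ ≤ (μ⁻¹ * ν^(EE/(2*β))) * (Chead * T^(SIG+1)) +
          (μ⁻¹ * ν^(EE/α)) * ((1 + 1/(-((SIG-EE)+1))) * (M:ℝ)^((SIG-EE)+1)) := by
          apply add_le_add
          · exact mul_le_mul_of_nonneg_left
              (my_head_fin hσgt hT1.le hn N)
              (mul_nonneg (inv_nonneg.mpr hμ.le) (Real.rpow_nonneg hν0.le _))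
          · exact mul_le_mul_of_nonneg_left
              (my_tail_fin hc hM1 N)
              (mul_nonneg (inv_nonneg.mpr hμ.le) (Real.rpow_nonneg hν0.le _))
      _ ≤ (Chead + Ctail) * (μ⁻¹ * (ν^(EE/(2*β)) * T^(SIG+1))) := by
          have h1δ : (0:ℝ) < 1/(-((SIG-EE)+1)) := one_div_pos.mpr hδ
          have hone : (0:ℝ) ≤ 1 + 1/(-((SIG-EE)+1)) := by linarith
          have hMbd : (M:ℝ)^((SIG-EE)+1) ≤ T^((SIG-EE)+1) * ((n:ℝ)+2)^(-((SIG-EE)+1)) := by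
            have h1 : (M:ℝ)^((SIG-EE)+1) ≤ (T/((n:ℝ)+2))^((SIG-EE)+1) :=
              Real.rpow_le_rpow_of_nonpos (by positivity) hMge (by linarith)
            have h2 : (T/((n:ℝ)+2))^((SIG-EE)+1)
                = T^((SIG-EE)+1) * ((n:ℝ)+2)^(-((SIG-EE)+1)) := by
              rw [Real.div_rpow hT0.le (by linarith : (0:ℝ) ≤ (n:ℝ)+2),
                Real.rpow_neg (by linarith : (0:ℝ) ≤ (n:ℝ)+2), div_eq_mul_inv]
            exact h1.trans_eq h2
          have hkeyid : ν^(EE/α) * T^((SIG-EE)+1) = ν^(EE/(2*β)) * T^(SIG+1) := by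
            rw [hT, ← Real.rpow_mul hν0.le, ← Real.rpow_mul hν0.le,
              ← Real.rpow_add hν0, ← Real.rpow_add hν0]
            congr 1
            ring
          have hμν1 : (0:ℝ) ≤ μ⁻¹ * ν^(EE/α) :=
            mul_nonneg (inv_nonneg.mpr hμ.le) (Real.rpow_nonneg hν0.le _)
          have hsec : (μ⁻¹ * ν^(EE/α)) * ((1 + 1/(-((SIG-EE)+1))) * (M:ℝ)^((SIG-EE)+1))
              ≤ Ctail * (μ⁻¹ * (ν^(EE/(2*β)) * T^(SIG+1))) := by
            have h3 : (μ⁻¹ * ν^(EE/α)) * ((1 + 1/(-((SIG-EE)+1))) * (M:ℝ)^((SIG-EE)+1))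
                ≤ (μ⁻¹ * ν^(EE/α)) * ((1 + 1/(-((SIG-EE)+1))) *
                  (T^((SIG-EE)+1) * ((n:ℝ)+2)^(-((SIG-EE)+1)))) := by
              apply mul_le_mul_of_nonneg_left _ hμν1
              exact mul_le_mul_of_nonneg_left hMbd hone
            refine h3.trans ?_
            have h4 : (μ⁻¹ * ν^(EE/α)) * ((1 + 1/(-((SIG-EE)+1))) *
                  (T^((SIG-EE)+1) * ((n:ℝ)+2)^(-((SIG-EE)+1))))
                = Ctail * (μ⁻¹ * (ν^(EE/α) * T^((SIG-EE)+1))) := by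
              rw [hCtail]; ring
            rw [h4, hkeyid]
          have hfst : (μ⁻¹ * ν^(EE/(2*β))) * (Chead * T^(SIG+1))
              = Chead * (μ⁻¹ * (ν^(EE/(2*β)) * T^(SIG+1))) := by ring
          rw [add_mul Chead Ctail (μ⁻¹ * (ν^(EE/(2*β)) * T^(SIG+1)))]
          exact add_le_add (le_of_eq hfst) hsec
      _ ≤ (C1 + Chead + Ctail) * (μ⁻¹ * (ν^(EE/(2*β)) * T^(SIG+1))) := by
          apply mul_le_mul_of_nonneg_right (by linarith)
          exact mul_nonneg (inv_nonneg.mpr hμ.le)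
            (mul_nonneg (Real.rpow_nonneg hν0.le _) (Real.rpow_nonneg hT0.le _))
end
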